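/- arXiv:1801.10401 — 2 statements merged into one kernel-verified Lean document; each statement's English description precedes it below -/
import Mathlib

section
/- Every subgraph of a funnel is a funnel; in particular, being a funnel is a hereditary property: deleting vertices or arcs from a funnel yields a funnel. -/
variable {V : Type*} [Fintype V] [DecidableEq V]

/-- Arc adjacency of a digraph given by its finite arc set. -/
def ArcAdj (A : Finset (V × V)) : V → V → Prop := fun u v => (u, v) ∈ A

/-- A digraph is a DAG if it contains no directed cycle. -/
def IsDAG (A : Finset (V × V)) : Prop := ∀ v : V, ¬ Relation.TransGen (ArcAdj A) v v

/-- Indegree of a vertex. -/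
def inDeg (A : Finset (V × V)) (v : V) : ℕ := (A.filter fun e => e.2 = v).card

/-- Outdegree of a vertex. -/
def outDeg (A : Finset (V × V)) (v : V) : ℕ := (A.filter fun e => e.1 = v).card

/-- A source is a vertex of indegree 0. -/
def IsSource (A : Finset (V × V)) (v : V) : Prop := inDeg A v = 0

/-- A sink is a vertex of outdegree 0. -/
def IsSink (A : Finset (V × V)) (v : V) : Prop := outDeg A v = 0

/-- The arcs (consecutive pairs of vertices) of a path given as a list of vertices. -/
def arcsOf (p : List V) : List (V × V) := p.zip p.tail

/-- A source-sink path: a directed path (with at least one arc) starting at a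
source and ending at a sink. -/
def IsSourceSinkPath (A : Finset (V × V)) (p : List V) : Prop :=
  2 ≤ p.length ∧ List.Chain' (ArcAdj A) p ∧ p.Nodup ∧
  (∃ s, p.head? = some s ∧ IsSource A s) ∧
  (∃ t, p.getLast? = some t ∧ IsSink A t)

/-- An arc is private if exactly one source-sink path contains it. -/
def IsPrivate (A : Finset (V × V)) (e : V × V) : Prop :=
  ∃! p : List V, IsSourceSinkPath A p ∧ e ∈ arcsOf p

/-- A funnel: every source-sink path contains at least one private arc. -/
def IsFunnel (A : Finset (V × V)) : Prop :=
  ∀ p : List V, IsSourceSinkPath A p → ∃ e ∈ arcsOf p, IsPrivate A e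

/-- The arc-deletion distance to a funnel: the minimum number of arcs whose
deletion turns the digraph into a funnel. -/
noncomputable def funnelDist (A : Finset (V × V)) : ℕ :=
  sInf {k | ∃ B ⊆ A, B.card = k ∧ IsFunnel (A \ B)}

set_option linter.unusedSectionVars false
set_option linter.unusedVariables false
set_option maxHeartbeats 1000000

section Aux7

open List Relation

variable {V : Type*} [Fintype V] [DecidableEq V]

/-! ### Generic list/relation helpers -/

section Generic
variable {W : Type*} {r : W → W → Prop} {a b : W} {l m t : List W} {e : W × W}

lemma aux7_transGen_of_chain_mem : ∀ {a : W} {l : List W},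
    List.Chain r a l → b ∈ l → TransGen r a b := by
  intro a l h hb
  induction l generalizing a with
  | nil => simp at hb
  | cons c l ih =>
    replace h := List.chain_cons.mp h
    rcases List.mem_cons.mp hb with rfl | hb
    · exact TransGen.single h.1
    · exact TransGen.head h.1 (ih h.2 hb)

lemma aux7_nodup_of_chain' (hirr : ∀ v : W, ¬ TransGen r v v) :
    ∀ {l : List W}, List.Chain' r l → l.Nodup := by
  intro l h
  induction l with
  | nil => simp
  | cons a l ih =>
    have h1 : List.Chain r a l := h
    refine List.nodup_cons.mpr ⟨fun hmem => hirr a (aux7_transGen_of_chain_mem h1 hmem), ih h.tail⟩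

lemma aux7_exists_forward (hw : WellFounded (flip r)) (x : W) :
    ∃ l, List.Chain r x l ∧ ∀ b, ¬ r ((x :: l).getLast (List.cons_ne_nil _ _)) b := by
  induction x using WellFounded.induction hw with
  | _ x ih =>
    by_cases h : ∃ b, r x b
    · obtain ⟨b, hb⟩ := h
      obtain ⟨l, hl, hlast⟩ := ih b hb
      exact ⟨b :: l, List.chain_cons.mpr ⟨hb, hl⟩, by
        simpa [List.getLast_cons (List.cons_ne_nil _ _)] using hlast⟩
    · exact ⟨[], List.Chain.nil, by simpa [List.getLast_singleton] using fun b hb => h ⟨b, hb⟩⟩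

lemma aux7_chain_unique :
    ∀ {l1 l2 : List W} {y : W}, List.Chain r y l1 → List.Chain r y l2 →
      (∀ b, ¬ r ((y :: l1).getLast (List.cons_ne_nil _ _)) b) →
      (∀ b, ¬ r ((y :: l2).getLast (List.cons_ne_nil _ _)) b) →
      (∀ z a b, ReflTransGen r y z → r z a → r z b → a = b) → l1 = l2 := by
  intro l1
  induction l1 with
  | nil =>
    intro l2 y h1 h2 hs1 hs2 hu
    cases l2 with
    | nil => rfl
    | cons b l2 =>
      exact absurd (List.chain_cons.mp h2).1 (by simpa using hs1 b)
  | cons a l1 ih =>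
    intro l2 y h1 h2 hs1 hs2 hu
    cases l2 with
    | nil => exact absurd (List.chain_cons.mp h1).1 (by simpa using hs2 a)
    | cons b l2 =>
      obtain ⟨hya, h1'⟩ := List.chain_cons.mp h1
      obtain ⟨hyb, h2'⟩ := List.chain_cons.mp h2
      obtain rfl : a = b := hu y a b ReflTransGen.refl hya hyb
      have := ih (y := a) h1' h2'
        (by simpa [List.getLast_cons (List.cons_ne_nil _ _)] using hs1)
        (by simpa [List.getLast_cons (List.cons_ne_nil _ _)] using hs2)
        (fun z c d hz => hu z c d (ReflTransGen.head hya hz))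
      rw [this]

end Generic

/-! ### arcsOf helpers -/

section Arcs
variable {a b : V} {l m t : List V} {e : V × V}

lemma aux7_arcsOf_cons : e ∈ arcsOf l → e ∈ arcsOf (a :: l) := by
  cases l with
  | nil => simp [arcsOf]
  | cons b l => intro h; simpa [arcsOf] using Or.inr (by simpa [arcsOf] using h)

lemma aux7_arcsOf_append_right : e ∈ arcsOf l → e ∈ arcsOf (m ++ l) := by
  induction m with
  | nil => simp
  | cons a m ih => exact fun h => aux7_arcsOf_cons (ih h)

lemma aux7_arcsOf_cons_cons : arcsOf (a :: b :: l) = (a, b) :: arcsOf (b :: l) := rfl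

lemma aux7_arcsOf_append_left : ∀ {l : List V}, e ∈ arcsOf l → e ∈ arcsOf (l ++ t) := by
  intro l h
  induction l with
  | nil => simp [arcsOf] at h
  | cons a l ih =>
    cases l with
    | nil => simp [arcsOf] at h
    | cons b l' =>
      rw [aux7_arcsOf_cons_cons] at h
      rcases List.mem_cons.mp h with rfl | h
      · exact List.mem_cons_self
      · exact List.mem_cons_of_mem _ (ih h)

lemma aux7_arcsOf_prefix (hp : l <+: m) : e ∈ arcsOf l → e ∈ arcsOf m := by
  rcases hp with ⟨t, rfl⟩; exact aux7_arcsOf_append_left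

lemma aux7_arcsOf_split (hβ : t ≠ []) :
    ∀ {l : List V}, e ∈ arcsOf (l ++ t) → e ∈ arcsOf (l ++ [t.head hβ]) ∨ e ∈ arcsOf t := by
  intro l h
  induction l with
  | nil => exact Or.inr h
  | cons a l ih =>
    cases l with
    | nil =>
      cases t with
      | nil => simp at hβ
      | cons c t' =>
        rw [List.singleton_append, aux7_arcsOf_cons_cons] at h
        rcases List.mem_cons.mp h with rfl | h
        · exact Or.inl (List.mem_cons_self)
        · exact Or.inr h
    | cons b l' =>
      rw [List.cons_append, List.cons_append, aux7_arcsOf_cons_cons] at h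
      rcases List.mem_cons.mp h with rfl | h
      · exact Or.inl (by
          rw [List.cons_append, List.cons_append, aux7_arcsOf_cons_cons]
          exact List.mem_cons_self)
      · rcases ih (by simpa using h) with h' | h'
        · exact Or.inl (aux7_arcsOf_cons h')
        · exact Or.inr h'

lemma aux7_mem_arcsOf_split :
    ∀ {q : List V}, e ∈ arcsOf q → ∃ l1 l2, q = l1 ++ e.1 :: e.2 :: l2 := by
  intro q h
  induction q with
  | nil => simp [arcsOf] at h
  | cons a q ih =>
    cases q with
    | nil => simp [arcsOf] at h
    | cons b q' =>
      rw [aux7_arcsOf_cons_cons] at h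
      rcases List.mem_cons.mp h with h | h
      · subst h; exact ⟨[], q', rfl⟩
      · obtain ⟨l1, l2, hq⟩ := ih h
        exact ⟨a :: l1, l2, by simp [hq]⟩

lemma aux7_arc_mem {A : Finset (V × V)} :
    ∀ {p : List V}, List.Chain' (ArcAdj A) p → e ∈ arcsOf p → (e.1, e.2) ∈ A := by
  intro p hc h
  induction p with
  | nil => simp [arcsOf] at h
  | cons a p ih =>
    cases p with
    | nil => simp [arcsOf] at h
    | cons b p' =>
      rw [aux7_arcsOf_cons_cons] at h
      rcases List.mem_cons.mp h with rfl | h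
      · exact (List.isChain_cons_cons.mp hc).1
      · exact ih (List.isChain_cons_cons.mp hc).2 h

end Arcs
/-! ### degree and DAG helpers -/

section Deg
variable {A : Finset (V × V)} {u v a b : V}

lemma aux7_out_unique (h : outDeg A v ≤ 1) (ha : (v, a) ∈ A) (hb : (v, b) ∈ A) : a = b := by
  have := Finset.card_le_one.mp h (v, a) (by simp [Finset.mem_filter, ha]) (v, b)
    (by simp [Finset.mem_filter, hb])
  exact congrArg Prod.snd this

lemma aux7_in_unique (h : inDeg A v ≤ 1) (ha : (a, v) ∈ A) (hb : (b, v) ∈ A) : a = b := by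
  have := Finset.card_le_one.mp h (a, v) (by simp [Finset.mem_filter, ha]) (b, v)
    (by simp [Finset.mem_filter, hb])
  exact congrArg Prod.fst this

lemma aux7_sink_no_out (h : IsSink A v) (ha : (v, a) ∈ A) : False := by
  have : (v, a) ∈ A.filter (fun e => e.1 = v) := by simp [Finset.mem_filter, ha]
  rw [IsSink, outDeg, Finset.card_eq_zero] at h
  simp [h] at this

lemma aux7_source_no_in (h : IsSource A v) (ha : (a, v) ∈ A) : False := by
  have : (a, v) ∈ A.filter (fun e => e.2 = v) := by simp [Finset.mem_filter, ha]
  rw [IsSource, inDeg, Finset.card_eq_zero] at h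
  simp [h] at this

lemma aux7_sink_of_no_out (h : ∀ b, ¬ (v, b) ∈ A) : IsSink A v := by
  rw [IsSink, outDeg, Finset.card_eq_zero, Finset.filter_eq_empty_iff]
  rintro ⟨x, y⟩ hx rfl
  exact h y hx

lemma aux7_source_of_no_in (h : ∀ b, ¬ (b, v) ∈ A) : IsSource A v := by
  rw [IsSource, inDeg, Finset.card_eq_zero, Finset.filter_eq_empty_iff]
  rintro ⟨x, y⟩ hx hy
  exact h x (by cases hy; exact hx)

lemma aux7_exists_other_out (h : 2 ≤ outDeg A v) (ha : (v, a) ∈ A) :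
    ∃ b, (v, b) ∈ A ∧ b ≠ a := by
  obtain ⟨x, hx, hne⟩ := Finset.exists_mem_ne (by omega : 1 < outDeg A v) (v, a)
  rw [Finset.mem_filter] at hx
  refine ⟨x.2, by rw [← hx.2]; exact hx.1, fun hcontra => hne ?_⟩
  have : x = (v, x.2) := by rw [← hx.2]
  rw [this, hcontra]

lemma aux7_exists_other_in (h : 2 ≤ inDeg A u) (ha : (a, u) ∈ A) :
    ∃ b, (b, u) ∈ A ∧ b ≠ a := by
  obtain ⟨x, hx, hne⟩ := Finset.exists_mem_ne (by omega : 1 < inDeg A u) (a, u)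
  rw [Finset.mem_filter] at hx
  refine ⟨x.1, by rw [← hx.2]; exact hx.1, fun hcontra => hne ?_⟩
  have : x = (x.1, u) := by rw [← hx.2]
  rw [this, hcontra]

lemma aux7_wf (hdag : IsDAG A) : WellFounded (ArcAdj A) := by
  have htg : WellFounded (Relation.TransGen (ArcAdj A)) := by
    have : IsIrrefl V (Relation.TransGen (ArcAdj A)) := ⟨hdag⟩
    exact Finite.wellFounded_of_trans_of_irrefl _
  exact Subrelation.wf (fun h => Relation.TransGen.single h) htg

lemma aux7_wf_flip (hdag : IsDAG A) : WellFounded (flip (ArcAdj A)) := by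
  have htg : WellFounded (Relation.TransGen (flip (ArcAdj A))) := by
    have : IsIrrefl V (Relation.TransGen (flip (ArcAdj A))) :=
      ⟨fun v hv => hdag v (Relation.transGen_swap.mp hv)⟩
    exact Finite.wellFounded_of_trans_of_irrefl _
  exact Subrelation.wf (fun h => Relation.TransGen.single h) htg

end Deg

/-! ### forced arcs are private -/

section Main
variable {A : Finset (V × V)} {x y : V}

lemma aux7_ssp_eq
    (hback : ∀ z, Relation.ReflTransGen (ArcAdj A) z x → inDeg A z ≤ 1)
    (hforw : ∀ z, Relation.ReflTransGen (ArcAdj A) y z → outDeg A z ≤ 1)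
    {p q : List V} (hp : IsSourceSinkPath A p) (hq : IsSourceSinkPath A q)
    (hpm : (x, y) ∈ arcsOf p) (hqm : (x, y) ∈ arcsOf q) : q = p := by
  obtain ⟨-, hpc, -, ⟨sp, hsp, hsrcp⟩, ⟨tp, htp, hsinkp⟩⟩ := hp
  obtain ⟨-, hqc, -, ⟨sq, hsq, hsrcq⟩, ⟨tq, htq, hsinkq⟩⟩ := hq
  obtain ⟨p1, p2, hpe⟩ := aux7_mem_arcsOf_split hpm
  obtain ⟨q1, q2, hqe⟩ := aux7_mem_arcsOf_split hqm
  simp only at hpe hqe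
  subst hpe hqe
  -- forward chains
  have hfp : List.Chain (ArcAdj A) y p2 :=
    (List.isChain_cons_cons.mp (hpc.suffix ⟨p1, rfl⟩ : List.Chain' (ArcAdj A) (x :: y :: p2))).2
  have hfq : List.Chain (ArcAdj A) y q2 :=
    (List.isChain_cons_cons.mp (hqc.suffix ⟨q1, rfl⟩ : List.Chain' (ArcAdj A) (x :: y :: q2))).2
  -- forward last values
  have hlp : (y :: p2).getLast? = some tp := by
    rw [List.getLast?_append, List.getLast?_cons_cons,
      List.getLast?_eq_getLast (l := y :: p2) (List.cons_ne_nil _ _), show ∀ x : Option V, (some ((y :: p2).getLast (List.cons_ne_nil _ _))).or x = some ((y :: p2).getLast (List.cons_ne_nil _ _)) from fun _ => rfl] at htp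
    rw [List.getLast?_eq_getLast (l := y :: p2) (List.cons_ne_nil _ _)]
    exact htp
  have hlq : (y :: q2).getLast? = some tq := by
    rw [List.getLast?_append, List.getLast?_cons_cons,
      List.getLast?_eq_getLast (l := y :: q2) (List.cons_ne_nil _ _), show ∀ x : Option V, (some ((y :: q2).getLast (List.cons_ne_nil _ _))).or x = some ((y :: q2).getLast (List.cons_ne_nil _ _)) from fun _ => rfl] at htq
    rw [List.getLast?_eq_getLast (l := y :: q2) (List.cons_ne_nil _ _)]
    exact htq
  have hsinkp' : ∀ b, ¬ ArcAdj A ((y :: p2).getLast (List.cons_ne_nil _ _)) b := by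
    intro b hb
    rw [List.getLast?_eq_getLast (List.cons_ne_nil _ _)] at hlp
    rw [Option.some_inj.mp hlp] at hb
    exact aux7_sink_no_out hsinkp hb
  have hsinkq' : ∀ b, ¬ ArcAdj A ((y :: q2).getLast (List.cons_ne_nil _ _)) b := by
    intro b hb
    rw [List.getLast?_eq_getLast (List.cons_ne_nil _ _)] at hlq
    rw [Option.some_inj.mp hlq] at hb
    exact aux7_sink_no_out hsinkq hb
  have h2 : q2 = p2 := aux7_chain_unique hfq hfp hsinkq' hsinkp'
    (fun z a b hz => aux7_out_unique (hforw z hz))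
  -- backward chains (reversed)
  have hbp : List.Chain (flip (ArcAdj A)) x p1.reverse := by
    have hpre : List.Chain' (ArcAdj A) (p1 ++ [x]) := hpc.prefix ⟨y :: p2, by simp⟩
    have : List.Chain' (ArcAdj A) ((x :: p1.reverse).reverse) := by
      simpa [List.reverse_cons] using hpre
    exact List.isChain_reverse.mp this
  have hbq : List.Chain (flip (ArcAdj A)) x q1.reverse := by
    have hqre : List.Chain' (ArcAdj A) (q1 ++ [x]) := hqc.prefix ⟨y :: q2, by simp⟩
    have : List.Chain' (ArcAdj A) ((x :: q1.reverse).reverse) := by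
      simpa [List.reverse_cons] using hqre
    exact List.isChain_reverse.mp this
  -- backward last values = heads
  have hglp : (x :: p1.reverse).getLast? = some sp := by
    have : (x :: p1.reverse) = (p1 ++ [x]).reverse := by simp
    rw [this, List.getLast?_reverse, ← hsp, List.head?_append, List.head?_append]
    simp
  have hglq : (x :: q1.reverse).getLast? = some sq := by
    have : (x :: q1.reverse) = (q1 ++ [x]).reverse := by simp
    rw [this, List.getLast?_reverse, ← hsq, List.head?_append, List.head?_append]
    simp
  have hsrcp' : ∀ b, ¬ flip (ArcAdj A) ((x :: p1.reverse).getLast (List.cons_ne_nil _ _)) b := by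
    intro b hb
    rw [List.getLast?_eq_getLast (List.cons_ne_nil _ _)] at hglp
    rw [Option.some_inj.mp hglp] at hb
    exact aux7_source_no_in hsrcp hb
  have hsrcq' : ∀ b, ¬ flip (ArcAdj A) ((x :: q1.reverse).getLast (List.cons_ne_nil _ _)) b := by
    intro b hb
    rw [List.getLast?_eq_getLast (List.cons_ne_nil _ _)] at hglq
    rw [Option.some_inj.mp hglq] at hb
    exact aux7_source_no_in hsrcq hb
  have h1 : q1.reverse = p1.reverse := aux7_chain_unique hbq hbp hsrcq' hsrcp'
    (fun z a b hz => aux7_in_unique (hback z (Relation.reflTransGen_swap.mp hz)))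
  rw [List.reverse_injective h1, h2]

end Main

/-! ### characterization implies funnel -/

def aux7_RF (A : Finset (V × V)) (z : V) : Prop :=
  ∃ w, Relation.ReflTransGen (ArcAdj A) z w ∧ 2 ≤ outDeg A w

lemma aux7_chain_ivt {P : V → Prop} {r : V → V → Prop} :
    ∀ {l : List V} {a : V}, List.Chain r a l → P a →
    ¬ P ((a :: l).getLast (List.cons_ne_nil _ _)) →
    ∃ x y, (x, y) ∈ arcsOf (a :: l) ∧ P x ∧ ¬ P y := by
  intro l
  induction l with
  | nil => intro a _ hp hnp; simp [List.getLast_singleton] at hnp; exact absurd hp hnp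
  | cons b l ih =>
    intro a hc hp hnp
    obtain ⟨hab, hc'⟩ := List.chain_cons.mp hc
    by_cases hb : P b
    · obtain ⟨x, y, hmem, hx, hy⟩ := ih hc' hb
        (by simpa [List.getLast_cons (List.cons_ne_nil _ _)] using hnp)
      exact ⟨x, y, List.mem_cons_of_mem _ hmem, hx, hy⟩
    · exact ⟨a, b, List.mem_cons_self, hp, hb⟩

lemma aux7_funnel_of_C {A : Finset (V × V)} (hdag : IsDAG A)
    (hC : ∀ u v : V, 2 ≤ inDeg A u → 2 ≤ outDeg A v →
      Relation.ReflTransGen (ArcAdj A) u v → False) : IsFunnel A := by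
  intro p hssp
  obtain ⟨hlen, hchain, hnd, ⟨s, hs, hsrc⟩, ⟨t, ht, hsink⟩⟩ := id hssp
  rcases p with - | ⟨va, vq⟩
  · simp at hlen
  rcases vq with - | ⟨vb, vl⟩
  · simp at hlen
  obtain rfl : s = va := by simpa using hs.symm
  have htv : (s :: vb :: vl).getLast (List.cons_ne_nil _ _) = t := by
    rw [List.getLast?_eq_getLast (List.cons_ne_nil _ _)] at ht
    exact Option.some_inj.mp ht
  have hchain' : List.Chain (ArcAdj A) s (vb :: vl) := hchain
  have hRFt : ¬ aux7_RF A t := by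
    rintro ⟨w, hw, hw2⟩
    rcases Relation.ReflTransGen.cases_head hw with rfl | ⟨c, hc, -⟩
    · rw [IsSink] at hsink; omega
    · exact aux7_sink_no_out hsink hc
  by_cases hRFa : aux7_RF A s
  · obtain ⟨x, y, hmem, hx, hy⟩ := aux7_chain_ivt hchain' hRFa (htv ▸ hRFt)
    have hback : ∀ z, Relation.ReflTransGen (ArcAdj A) z x → inDeg A z ≤ 1 := by
      intro z hz
      by_contra hcon
      obtain ⟨w, hxw, hw⟩ := hx
      exact hC z w (by omega) hw (hz.trans hxw)
    have hforw : ∀ z, Relation.ReflTransGen (ArcAdj A) y z → outDeg A z ≤ 1 := by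
      intro z hz
      by_contra hcon
      exact hy ⟨z, hz, by omega⟩
    exact ⟨(x, y), hmem, ⟨s :: vb :: vl, ⟨hssp, hmem⟩,
      fun vq hq => aux7_ssp_eq hback hforw hssp hq.1 hmem hq.2⟩⟩
  · have hab : ArcAdj A s vb := (List.chain_cons.mp hchain').1
    have hmem : (s, vb) ∈ arcsOf (s :: vb :: vl) := List.mem_cons_self
    have hback : ∀ z, Relation.ReflTransGen (ArcAdj A) z s → inDeg A z ≤ 1 := by
      intro z hz
      rcases Relation.ReflTransGen.cases_tail hz with rfl | ⟨c, -, hc⟩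
      · rw [IsSource] at hsrc; omega
      · exact absurd hc (fun h => aux7_source_no_in hsrc h)
    have hforw : ∀ z, Relation.ReflTransGen (ArcAdj A) vb z → outDeg A z ≤ 1 := by
      intro z hz
      by_contra hcon
      exact hRFa ⟨z, Relation.ReflTransGen.head hab hz, by omega⟩
    exact ⟨(s, vb), hmem, ⟨s :: vb :: vl, ⟨hssp, hmem⟩,
      fun vq hq => aux7_ssp_eq hback hforw hssp hq.1 hmem hq.2⟩⟩

/-! ### funnel implies characterization -/

lemma aux7_exists_forward' {r : V → V → Prop} (hw : WellFounded (flip r)) (x : V) :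
    ∃ l t, List.Chain r x l ∧ (x :: l).getLast? = some t ∧ ∀ b, ¬ r t b := by
  obtain ⟨l, hl, hlast⟩ := aux7_exists_forward hw x
  exact ⟨l, _, hl, List.getLast?_eq_getLast _, hlast⟩

lemma aux7_getLast?_append_right {l m : List V} (h : m ≠ []) :
    (l ++ m).getLast? = m.getLast? := by
  rw [List.getLast?_append, List.getLast?_eq_getLast h]; rfl

lemma aux7_head?_append_left {l m : List V} (h : l ≠ []) :
    (l ++ m).head? = l.head? := by
  rw [List.head?_append, List.head?_eq_head h]; rfl

lemma aux7_arcsOf_split' {e : V × V} {c : V} {l r : List V} :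
    e ∈ arcsOf (l ++ c :: r) → e ∈ arcsOf (l ++ [c]) ∨ e ∈ arcsOf (c :: r) :=
  fun h => aux7_arcsOf_split (List.cons_ne_nil c r) h

lemma aux7_C_of_funnel {A : Finset (V × V)} (hdag : IsDAG A) (hfun : IsFunnel A) :
    ∀ u v : V, 2 ≤ inDeg A u → 2 ≤ outDeg A v →
      Relation.ReflTransGen (ArcAdj A) u v → False := by
  intro u v hu hv huv
  obtain ⟨mid, hmid, hmidlast⟩ := List.exists_isChain_cons_of_relationReflTransGen huv
  have hmidlast? : (u :: mid).getLast? = some v := by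
    rw [List.getLast?_eq_getLast (List.cons_ne_nil _ _), hmidlast]
  obtain ⟨l1, s, hl1, hl1lastq, hl1last⟩ :=
    aux7_exists_forward' (r := flip (ArcAdj A)) (aux7_wf hdag) u
  obtain ⟨l2, t, hl2, hl2lastq, hl2last⟩ :=
    aux7_exists_forward' (r := ArcAdj A) (aux7_wf_flip hdag) v
  have hsrc : IsSource A s := aux7_source_of_no_in hl1last
  have hsink : IsSink A t := aux7_sink_of_no_out hl2last
  have hl1ne : l1 ≠ [] := by
    rintro rfl
    have : s = u := by simpa using hl1lastq.symm
    subst this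
    rw [IsSource] at hsrc; omega
  have hl2ne : l2 ≠ [] := by
    rintro rfl
    have : t = v := by simpa using hl2lastq.symm
    subst this
    rw [IsSink] at hsink; omega
  obtain ⟨c1, l1', rfl⟩ := List.exists_cons_of_ne_nil hl1ne
  obtain ⟨b1, l2', rfl⟩ := List.exists_cons_of_ne_nil hl2ne
  rw [List.getLast?_cons_cons] at hl1lastq hl2lastq
  have hc1u : (c1, u) ∈ A := (List.chain_cons.mp hl1).1
  have hvb1 : (v, b1) ∈ A := (List.chain_cons.mp hl2).1
  -- the suffix from u
  have hchainS : List.Chain' (ArcAdj A) (u :: (mid ++ b1 :: l2')) := by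
    have h1 : List.Chain' (ArcAdj A) ((u :: mid) ++ b1 :: l2') := by
      refine List.isChain_append.mpr
        ⟨hmid, (show List.Chain' (ArcAdj A) (v :: b1 :: l2') from hl2).tail, ?_⟩
      intro x hx y hy
      rw [hmidlast?] at hx
      simp only [List.head?_cons, Option.mem_def, Option.some_inj] at hx hy
      rw [← hx, ← hy]
      exact hvb1
    exact h1
  -- the full path P
  have hrev1 : List.Chain' (ArcAdj A) ((u :: c1 :: l1').reverse) :=
    List.isChain_reverse.mpr hl1
  have hchainP : List.Chain' (ArcAdj A) ((c1 :: l1').reverse ++ u :: (mid ++ b1 :: l2')) := by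
    refine List.isChain_append.mpr ⟨hrev1.prefix ⟨[u], by simp⟩, hchainS, ?_⟩
    intro x hx y hy
    rw [List.getLast?_reverse] at hx
    simp only [List.head?_cons, Option.mem_def, Option.some_inj] at hx hy
    rw [← hx, ← hy]
    exact hc1u
  have hPhead : ((c1 :: l1').reverse ++ u :: (mid ++ b1 :: l2')).head? = some s := by
    rw [aux7_head?_append_left (by simp), List.head?_reverse, hl1lastq]
  have hPeq2 : (c1 :: l1').reverse ++ u :: (mid ++ b1 :: l2')
      = ((c1 :: l1').reverse ++ u :: mid) ++ b1 :: l2' := by simp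
  have hPlast : ((c1 :: l1').reverse ++ u :: (mid ++ b1 :: l2')).getLast? = some t := by
    rw [hPeq2, aux7_getLast?_append_right (List.cons_ne_nil _ _), hl2lastq]
  have hP : IsSourceSinkPath A ((c1 :: l1').reverse ++ u :: (mid ++ b1 :: l2')) := by
    refine ⟨by simp; omega, hchainP,
      aux7_nodup_of_chain' hdag hchainP, ⟨s, hPhead, hsrc⟩, ⟨t, hPlast, hsink⟩⟩
  obtain ⟨e, heP, hepriv⟩ := hfun _ hP
  obtain ⟨w, hw, huniq⟩ := hepriv
  rcases aux7_arcsOf_split' heP with hcase | hcase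
  · -- e lies on the prefix ending at v: alternative path branching forward at v
    have hePv : e ∈ arcsOf ((c1 :: l1').reverse ++ u :: mid) :=
      aux7_arcsOf_prefix ⟨mid, by simp⟩ hcase
    obtain ⟨b2, hb2A, hb2ne⟩ := aux7_exists_other_out hv hvb1
    obtain ⟨l3, t3, hl3, hl3lastq, hl3last⟩ := aux7_exists_forward' (aux7_wf_flip hdag) b2
    have hPvlast : ((c1 :: l1').reverse ++ u :: mid).getLast? = some v := by
      rw [aux7_getLast?_append_right (List.cons_ne_nil _ _), hmidlast?]
    have hchainPv : List.Chain' (ArcAdj A) ((c1 :: l1').reverse ++ u :: mid) :=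
      hchainP.prefix ⟨b1 :: l2', hPeq2.symm⟩
    have hchainQ : List.Chain' (ArcAdj A)
        (((c1 :: l1').reverse ++ u :: mid) ++ b2 :: l3) := by
      refine List.isChain_append.mpr ⟨hchainPv, hl3, ?_⟩
      intro x hx y hy
      rw [hPvlast] at hx
      simp only [List.head?_cons, Option.mem_def, Option.some_inj] at hx hy
      rw [← hx, ← hy]
      exact hb2A
    have hQhead : (((c1 :: l1').reverse ++ u :: mid) ++ b2 :: l3).head? = some s := by
      rw [aux7_head?_append_left (by simp), aux7_head?_append_left (by simp),
        List.head?_reverse, hl1lastq]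
    have hQlast : (((c1 :: l1').reverse ++ u :: mid) ++ b2 :: l3).getLast? = some t3 := by
      rw [aux7_getLast?_append_right (List.cons_ne_nil _ _), hl3lastq]
    have hQ : IsSourceSinkPath A (((c1 :: l1').reverse ++ u :: mid) ++ b2 :: l3) := by
      refine ⟨by simp; omega, hchainQ,
        aux7_nodup_of_chain' hdag hchainQ, ⟨s, hQhead, hsrc⟩,
        ⟨t3, hQlast, aux7_sink_of_no_out hl3last⟩⟩
    have heQ : e ∈ arcsOf (((c1 :: l1').reverse ++ u :: mid) ++ b2 :: l3) :=
      aux7_arcsOf_prefix ⟨b2 :: l3, rfl⟩ hePv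
    have hQP : ((c1 :: l1').reverse ++ u :: mid) ++ b2 :: l3
        ≠ (c1 :: l1').reverse ++ u :: (mid ++ b1 :: l2') := by
      intro h
      rw [hPeq2] at h
      have := List.append_cancel_left h
      exact hb2ne (List.cons_eq_cons.mp this).1
    exact hQP ((huniq _ ⟨hQ, heQ⟩).trans (huniq _ ⟨hP, heP⟩).symm)
  · -- e lies on the suffix from u: alternative path branching backwards at u
    obtain ⟨a2, ha2A, ha2ne⟩ := aux7_exists_other_in hu hc1u
    obtain ⟨l4, s4, hl4, hl4lastq, hl4last⟩ :=
      aux7_exists_forward' (r := flip (ArcAdj A)) (aux7_wf hdag) a2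
    have hchainQ' : List.Chain' (ArcAdj A)
        ((a2 :: l4).reverse ++ u :: (mid ++ b1 :: l2')) := by
      refine List.isChain_append.mpr ⟨List.isChain_reverse.mpr hl4, hchainS, ?_⟩
      intro x hx y hy
      rw [List.getLast?_reverse] at hx
      simp only [List.head?_cons, Option.mem_def, Option.some_inj] at hx hy
      rw [← hx, ← hy]
      exact ha2A
    have hQ'head : ((a2 :: l4).reverse ++ u :: (mid ++ b1 :: l2')).head? = some s4 := by
      rw [aux7_head?_append_left (by simp), List.head?_reverse, hl4lastq]
    have hQ'last : ((a2 :: l4).reverse ++ u :: (mid ++ b1 :: l2')).getLast? = some t := by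
      have heq : (a2 :: l4).reverse ++ u :: (mid ++ b1 :: l2')
          = ((a2 :: l4).reverse ++ u :: mid) ++ b1 :: l2' := by simp
      rw [heq, aux7_getLast?_append_right (List.cons_ne_nil _ _), hl2lastq]
    have hQ' : IsSourceSinkPath A ((a2 :: l4).reverse ++ u :: (mid ++ b1 :: l2')) := by
      refine ⟨by simp; omega, hchainQ',
        aux7_nodup_of_chain' hdag hchainQ',
        ⟨s4, hQ'head, aux7_source_of_no_in hl4last⟩, ⟨t, hQ'last, hsink⟩⟩
    have heQ' : e ∈ arcsOf ((a2 :: l4).reverse ++ u :: (mid ++ b1 :: l2')) :=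
      aux7_arcsOf_append_right hcase
    have hQ'P : (a2 :: l4).reverse ++ u :: (mid ++ b1 :: l2')
        ≠ (c1 :: l1').reverse ++ u :: (mid ++ b1 :: l2') := by
      intro h
      have := List.reverse_injective (List.append_cancel_right h)
      exact ha2ne (List.cons_eq_cons.mp this).1
    exact hQ'P ((huniq _ ⟨hQ', heQ'⟩).trans (huniq _ ⟨hP, heP⟩).symm)

end Aux7


/-- Every subgraph of a funnel is a funnel (being a funnel is
hereditary under deletion of vertices or arcs; deleting vertices corresponds to
deleting all their incident arcs). -/
theorem funnel_hereditary (A B : Finset (V × V)) (hdag : IsDAG A)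
    (hfun : IsFunnel A) (hsub : B ⊆ A) : IsFunnel B := by
  have hC := aux7_C_of_funnel hdag hfun
  have hmono : ∀ a b : V, ArcAdj B a b → ArcAdj A a b := fun a b h => hsub h
  have hdagB : IsDAG B := fun v hv => hdag v (Relation.TransGen.mono hmono _ _ hv)
  refine aux7_funnel_of_C hdagB ?_
  intro u v hu hv huv
  refine hC u v ?_ ?_ (Relation.ReflTransGen.mono hmono _ _ huv)
  · exact le_trans hu (Finset.card_le_card (Finset.filter_subset_filter _ hsub))
  · exact le_trans hv (Finset.card_le_card (Finset.filter_subset_filter _ hsub))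
end

section
/- Let φ be a 3-CNF formula with n variables and m clauses in which every clause has exactly three distinct literals, and let D(φ) be the DAG constructed from φ by the variable-gadget/clause-gadget construction. Then D(φ) has arc-deletion distance to a funnel at most 2m + n if and only if φ is satisfiable. -/
variable {V : Type*} [Fintype V] [DecidableEq V]

/-- Vertices of the reduction DAG `D(φ)`: for each variable `x : Fin n` the six
vertices `x_0, x_t, x_f, x_1, x_2, x_3` (encoded as `(x, 0), …, (x, 5)`), and
for each clause `c : Fin m` the five vertices `c_0, …, c_4`
(encoded as `(c, 0), …, (c, 4)`). -/
abbrev RedV (n m : ℕ) := (Fin n × Fin 6) ⊕ (Fin m × Fin 5)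

/-- Arcs of the reduction DAG `D(φ)`, where a clause `φ c` consists of the three
distinct literals `φ c 0, φ c 1, φ c 2` and a literal is a pair (variable, sign):
`(x_t, x_0)`, `(x_f, x_0)`, `(x_0, x_i)` for `i = 1, 2, 3`; `(c_i, c_0)` for
`i = 1, …, 4`; and `(c_0, x_t)` if `x` occurs positively in clause `c`,
`(c_0, x_f)` if `x` occurs negatively in `c`. -/
def RedAdj (n m : ℕ) (φ : Fin m → Fin 3 → Fin n × Bool) :
    RedV n m → RedV n m → Prop := fun a b =>
  (∃ x : Fin n, (a = Sum.inl (x, 1) ∨ a = Sum.inl (x, 2)) ∧ b = Sum.inl (x, 0)) ∨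
  (∃ x : Fin n, a = Sum.inl (x, 0) ∧
      (b = Sum.inl (x, 3) ∨ b = Sum.inl (x, 4) ∨ b = Sum.inl (x, 5))) ∨
  (∃ (c : Fin m) (i : Fin 5), i ≠ 0 ∧ a = Sum.inr (c, i) ∧ b = Sum.inr (c, 0)) ∨
  (∃ (c : Fin m) (x : Fin n) (j : Fin 3), a = Sum.inr (c, 0) ∧
      ((φ c j = (x, true) ∧ b = Sum.inl (x, 1)) ∨
       (φ c j = (x, false) ∧ b = Sum.inl (x, 2))))

open Classical in
/-- The arc set of the reduction DAG `D(φ)`. -/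
noncomputable def redArcs (n m : ℕ) (φ : Fin m → Fin 3 → Fin n × Bool) :
    Finset (RedV n m × RedV n m) :=
  Finset.univ.filter fun e => RedAdj n m φ e.1 e.2

section General
variable {A : Finset (V × V)} {p : List V}

set_option linter.unusedSectionVars false

lemma arcsOf_cons (a b : V) (l : List V) : arcsOf (a :: b :: l) = (a, b) :: arcsOf (b :: l) := rfl

lemma arcsOf_append (l₁ l₂ : List V) (h : l₁ ≠ []) :
    arcsOf (l₁ ++ l₂) = arcsOf l₁ ++ arcsOf (l₁.getLast h :: l₂) := by
  induction l₁ with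
  | nil => exact absurd rfl h
  | cons a t ih =>
    cases t with
    | nil => rfl
    | cons b t' =>
      have h2 : (b :: t') ≠ [] := by simp
      calc arcsOf ((a :: b :: t') ++ l₂) = (a,b) :: arcsOf ((b :: t') ++ l₂) := rfl
      _ = (a,b) :: (arcsOf (b :: t') ++ arcsOf ((b::t').getLast h2 :: l₂)) := by rw [ih h2]
      _ = arcsOf (a::b::t') ++ arcsOf ((a::b::t').getLast h :: l₂) := by
          rw [List.getLast_cons_cons]; rfl

lemma chain'_pairwise (hc : List.Chain' (ArcAdj A) p) :
    p.Pairwise (Relation.TransGen (ArcAdj A)) := by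
  have hch : List.Chain' (Relation.TransGen (ArcAdj A)) p :=
    hc.imp fun a b h => Relation.TransGen.single h
  haveI : IsTrans V (Relation.TransGen (ArcAdj A)) := ⟨fun _ _ _ h h' => h.trans h'⟩
  exact List.isChain_iff_pairwise.1 hch

lemma nodup_of_chain' (hdag : IsDAG A) (hc : List.Chain' (ArcAdj A) p) : p.Nodup := by
  have := chain'_pairwise hc
  rw [List.Nodup]
  exact this.imp (fun {a b} h => by
    intro hab
    subst hab
    exact hdag a h)

lemma wf_flip (hdag : IsDAG A) : WellFounded (Function.swap (ArcAdj A)) := by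
  haveI : IsTrans V (Relation.TransGen (Function.swap (ArcAdj A))) :=
    ⟨fun _ _ _ h h' => h.trans h'⟩
  haveI : IsIrrefl V (Relation.TransGen (Function.swap (ArcAdj A))) := by
    constructor
    intro a h
    exact hdag a (Relation.transGen_swap.1 h)
  exact Subrelation.wf (fun {a b} h => Relation.TransGen.single h)
    (Finite.wellFounded_of_trans_of_irrefl _)

lemma outDeg_pos_of_arc {u v : V} (h : (u, v) ∈ A) : outDeg A u ≠ 0 :=
  fun hc => Finset.card_ne_zero_of_mem
    (show (u,v) ∈ A.filter (fun e => e.1 = u) from Finset.mem_filter.2 ⟨h, rfl⟩) hc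

lemma inDeg_pos_of_arc {u v : V} (h : (u, v) ∈ A) : inDeg A v ≠ 0 :=
  fun hc => Finset.card_ne_zero_of_mem
    (show (u,v) ∈ A.filter (fun e => e.2 = v) from Finset.mem_filter.2 ⟨h, rfl⟩) hc

lemma exists_path_to_sink (hdag : IsDAG A) (v : V) :
    ∃ p : List V, p.head? = some v ∧ List.Chain' (ArcAdj A) p ∧
      ∃ t, p.getLast? = some t ∧ IsSink A t := by
  induction v using (wf_flip hdag).induction with
  | _ v ih =>
    by_cases hs : IsSink A v
    · exact ⟨[v], rfl, List.isChain_singleton v, v, rfl, hs⟩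
    · have hne : (A.filter fun e => e.1 = v).Nonempty := by
        rw [← Finset.card_pos]
        exact Nat.pos_of_ne_zero hs
      obtain ⟨e, he⟩ := hne
      rw [Finset.mem_filter] at he
      obtain ⟨heA, he1⟩ := he
      have harc : (v, e.2) ∈ A := by rw [← he1]; exact heA
      obtain ⟨p, hh, hc, t, hl, ht⟩ := ih e.2 harc
      cases p with
      | nil => simp at hh
      | cons w q =>
        rw [List.head?_cons, Option.some_inj] at hh
        subst hh
        exact ⟨v :: e.2 :: q, rfl, List.isChain_cons_cons.2 ⟨harc, hc⟩, t,
          by rw [List.getLast?_cons_cons]; exact hl, ht⟩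

lemma mem_swap {u v : V} : (u, v) ∈ A.image Prod.swap ↔ (v, u) ∈ A := by
  constructor
  · intro h
    obtain ⟨e, he, hev⟩ := Finset.mem_image.1 h
    obtain ⟨a, b⟩ := e
    simp only [Prod.swap_prod_mk, Prod.mk.injEq] at hev
    obtain ⟨h1, h2⟩ := hev
    subst h1; subst h2; exact he
  · intro h
    exact Finset.mem_image.2 ⟨(v, u), h, rfl⟩

lemma arcAdj_swap : ArcAdj (A.image Prod.swap) = Function.swap (ArcAdj A) := by
  funext u v
  simp only [ArcAdj, Function.swap]
  rw [eq_iff_iff]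
  exact mem_swap

lemma isDAG_swap (hdag : IsDAG A) : IsDAG (A.image Prod.swap) := by
  intro v h
  rw [arcAdj_swap] at h
  exact hdag v (Relation.transGen_swap.1 h)

lemma isSink_swap {v : V} : IsSink (A.image Prod.swap) v ↔ IsSource A v := by
  have : (A.image Prod.swap).filter (fun e => e.1 = v) = (A.filter fun e => e.2 = v).image Prod.swap := by
    ext ⟨a, b⟩
    simp only [Finset.mem_filter]
    constructor
    · rintro ⟨hm, rfl⟩
      exact Finset.mem_image.2 ⟨(b, a), Finset.mem_filter.2 ⟨mem_swap.1 hm, rfl⟩, rfl⟩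
    · intro h
      obtain ⟨⟨c, d⟩, he, heq⟩ := Finset.mem_image.1 h
      rw [Finset.mem_filter] at he
      simp only [Prod.swap_prod_mk, Prod.mk.injEq] at heq
      obtain ⟨rfl, rfl⟩ := heq
      exact ⟨mem_swap.2 he.1, he.2⟩
  unfold IsSink IsSource outDeg inDeg
  rw [this, Finset.card_image_of_injective _ Prod.swap_injective]

lemma exists_path_from_source (hdag : IsDAG A) (v : V) :
    ∃ p : List V, p.getLast? = some v ∧ List.Chain' (ArcAdj A) p ∧
      ∃ s, p.head? = some s ∧ IsSource A s := by
  obtain ⟨q, hh, hc, t, hl, ht⟩ := exists_path_to_sink (isDAG_swap hdag) v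
  refine ⟨q.reverse, ?_, ?_, t, ?_, isSink_swap.1 ht⟩
  · rw [List.getLast?_reverse]; exact hh
  · show List.IsChain (ArcAdj A) q.reverse
    rw [List.isChain_reverse]
    rw [arcAdj_swap] at hc
    exact hc
  · rw [List.head?_reverse]; exact hl

/-- Key structural lemma: a path from a merge vertex to a fork vertex kills funnelness. -/
lemma not_funnel_of_merge_fork (hdag : IsDAG A) {v w : V}
    (hin : 2 ≤ inDeg A v) (hpath : Relation.ReflTransGen (ArcAdj A) v w)
    (hout : 2 ≤ outDeg A w) : ¬ IsFunnel A := by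
  intro hfun
  -- two in-arcs of v
  obtain ⟨e1, he1, e2, he2, hne⟩ := Finset.one_lt_card.1 (by omega : 1 < inDeg A v)
  rw [Finset.mem_filter] at he1 he2
  have harc1 : (e1.1, v) ∈ A := by rw [← he1.2, Prod.mk.eta]; exact he1.1
  have harc2 : (e2.1, v) ∈ A := by rw [← he2.2, Prod.mk.eta]; exact he2.1
  have hu12 : e1.1 ≠ e2.1 := by
    intro h
    exact hne (Prod.ext h (he1.2.trans he2.2.symm))
  -- two out-arcs of w
  obtain ⟨f1, hf1, f2, hf2, hnf⟩ := Finset.one_lt_card.1 (by omega : 1 < outDeg A w)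
  rw [Finset.mem_filter] at hf1 hf2
  have garc1 : (w, f1.2) ∈ A := by rw [← hf1.2, Prod.mk.eta]; exact hf1.1
  have garc2 : (w, f2.2) ∈ A := by rw [← hf2.2, Prod.mk.eta]; exact hf2.1
  have ht12 : f1.2 ≠ f2.2 := by
    intro h
    exact hnf (Prod.ext (hf1.2.trans hf2.2.symm) h)
  -- backward paths to sources
  obtain ⟨Q1, hQ1l, hQ1c, s1, hQ1h, hs1⟩ := exists_path_from_source hdag e1.1
  obtain ⟨Q2, hQ2l, hQ2c, s2, hQ2h, hs2⟩ := exists_path_from_source hdag e2.1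
  -- middle path from v to w
  obtain ⟨mid, hmidc, hmidl⟩ := List.exists_isChain_cons_of_relationReflTransGen hpath
  set M : List V := v :: mid with hM
  have hMne : M ≠ [] := by simp [hM]
  have hMc : List.Chain' (ArcAdj A) M := hmidc
  have hMh : M.head? = some v := rfl
  have hMl : M.getLast? = some w := by
    rw [List.getLast?_eq_getLast (l := M) hMne]
    exact congrArg some hmidl
  -- forward paths to sinks
  obtain ⟨R1, hR1h, hR1c, z1, hR1l, hz1⟩ := exists_path_to_sink hdag f1.2
  obtain ⟨R2, hR2h, hR2c, z2, hR2l, hz2⟩ := exists_path_to_sink hdag f2.2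
  have hQ1ne : Q1 ≠ [] := by intro h; rw [h] at hQ1l; simp at hQ1l
  have hQ2ne : Q2 ≠ [] := by intro h; rw [h] at hQ2l; simp at hQ2l
  have hR1ne : R1 ≠ [] := by intro h; rw [h] at hR1h; simp at hR1h
  have hR2ne : R2 ≠ [] := by intro h; rw [h] at hR2h; simp at hR2h
  -- concatenated paths
  set C1 : List V := Q1 ++ M with hC1
  set C2 : List V := Q2 ++ M with hC2
  have hC1ne : C1 ≠ [] := by simp [hC1, hQ1ne]
  have hC2ne : C2 ≠ [] := by simp [hC2, hQ2ne]
  have hC1c : List.Chain' (ArcAdj A) C1 := by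
    refine hQ1c.append hMc ?_
    intro x hx y hy
    rw [hQ1l] at hx; rw [hMh] at hy
    simp only [Option.mem_def, Option.some_inj] at hx hy
    rw [← hx, ← hy] at *
    exact harc1
  have hC2c : List.Chain' (ArcAdj A) C2 := by
    refine hQ2c.append hMc ?_
    intro x hx y hy
    rw [hQ2l] at hx; rw [hMh] at hy
    simp only [Option.mem_def, Option.some_inj] at hx hy
    rw [← hx, ← hy] at *
    exact harc2
  have hC1l : C1.getLast? = some w := by
    rw [hC1, List.getLast?_append, hMl]; rfl
  have hC2l : C2.getLast? = some w := by
    rw [hC2, List.getLast?_append, hMl]; rfl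
  have hC1h : C1.head? = some s1 := by
    rw [hC1, List.head?_append, hQ1h]; rfl
  have hC2h : C2.head? = some s2 := by
    rw [hC2, List.head?_append, hQ2h]; rfl
  -- the four source-sink paths
  have hssp : ∀ (C R : List V) (s z t' : V), C ≠ [] → R ≠ [] →
      List.Chain' (ArcAdj A) C → List.Chain' (ArcAdj A) R →
      C.getLast? = some w → R.head? = some t' → (w, t') ∈ A →
      C.head? = some s → IsSource A s → R.getLast? = some z → IsSink A z →
      IsSourceSinkPath A (C ++ R) := by
    intro C R s z t' hCne hRne hCc hRc hCl hRh harc hCh hs hRl hz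
    have hchain : List.Chain' (ArcAdj A) (C ++ R) := by
      refine hCc.append hRc ?_
      intro x hx y hy
      rw [hCl] at hx; rw [hRh] at hy
      simp only [Option.mem_def, Option.some_inj] at hx hy
      rw [← hx, ← hy] at *
      exact harc
    refine ⟨?_, hchain, nodup_of_chain' hdag hchain, ⟨s, ?_, hs⟩, ⟨z, ?_, hz⟩⟩
    · rw [List.length_append]
      have h1 : 1 ≤ C.length := List.length_pos_iff.2 hCne
      have h2 : 1 ≤ R.length := List.length_pos_iff.2 hRne
      omega
    · rw [List.head?_append, hCh]; rfl
    · rw [List.getLast?_append, hRl]; rfl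
  have hssp11 : IsSourceSinkPath A (C1 ++ R1) :=
    hssp C1 R1 s1 z1 f1.2 hC1ne hR1ne hC1c hR1c hC1l hR1h garc1 hC1h hs1 hR1l hz1
  have hssp12 : IsSourceSinkPath A (C1 ++ R2) :=
    hssp C1 R2 s1 z2 f2.2 hC1ne hR2ne hC1c hR2c hC1l hR2h garc2 hC1h hs1 hR2l hz2
  have hssp21 : IsSourceSinkPath A (C2 ++ R1) :=
    hssp C2 R1 s2 z1 f1.2 hC2ne hR1ne hC2c hR1c hC2l hR1h garc1 hC2h hs2 hR1l hz1
  -- distinctness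
  have hne12 : C1 ++ R1 ≠ C1 ++ R2 := by
    intro h
    have := List.append_cancel_left h
    rw [this] at hR1h
    rw [hR1h] at hR2h
    exact ht12 (Option.some_inj.1 hR2h)
  have hne21 : C1 ++ R1 ≠ C2 ++ R1 := by
    intro h
    have hC : C1 = C2 := List.append_cancel_right h
    rw [hC1, hC2] at hC
    have := List.append_cancel_right hC
    rw [this] at hQ1l
    rw [hQ1l] at hQ2l
    exact hu12 (Option.some_inj.1 hQ2l)
  -- getLast values
  have hgl1 : C1.getLast hC1ne = w := by
    have := List.getLast?_eq_getLast (l := C1) hC1ne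
    rw [hC1l] at this
    exact (Option.some_inj.1 this).symm
  have hgl2 : C2.getLast hC2ne = w := by
    have := List.getLast?_eq_getLast (l := C2) hC2ne
    rw [hC2l] at this
    exact (Option.some_inj.1 this).symm
  -- funnel gives a private arc on C1 ++ R1
  obtain ⟨e, hemem, p0, hp0, hup⟩ := hfun (C1 ++ R1) hssp11
  rw [arcsOf_append C1 R1 hC1ne, hgl1, List.mem_append] at hemem
  have h11 : C1 ++ R1 = p0 := hup (C1 ++ R1) ⟨hssp11, by
    rw [arcsOf_append C1 R1 hC1ne, hgl1, List.mem_append]; exact hemem⟩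
  rcases hemem with he | he
  · have h12 : C1 ++ R2 = p0 := hup (C1 ++ R2) ⟨hssp12, by
      rw [arcsOf_append C1 R2 hC1ne, hgl1, List.mem_append]; exact Or.inl he⟩
    exact hne12 (h11.trans h12.symm)
  · have h21 : C2 ++ R1 = p0 := hup (C2 ++ R1) ⟨hssp21, by
      rw [arcsOf_append C2 R1 hC2ne, hgl2, List.mem_append]; exact Or.inr he⟩
    exact hne21 (h11.trans h21.symm)

end General




section Reduction

variable {n m : ℕ} {φ : Fin m → Fin 3 → Fin n × Bool}

/-- literal vertex -/
def litV (n : ℕ) (m : ℕ) (ℓ : Fin n × Bool) : RedV n m :=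
  Sum.inl (ℓ.1, if ℓ.2 then 1 else 2)

lemma litV_inj : Function.Injective (litV n m) := by
  rintro ⟨x, b⟩ ⟨y, c⟩ h
  simp only [litV, Sum.inl.injEq, Prod.mk.injEq] at h
  obtain ⟨rfl, h2⟩ := h
  cases b <;> cases c <;> simp_all

lemma mem_redArcs {e : RedV n m × RedV n m} :
    e ∈ redArcs n m φ ↔ RedAdj n m φ e.1 e.2 := by
  classical
  simp [redArcs]

omit [Fintype V] [DecidableEq V] in
lemma isDAG_of_level {A : Finset (V × V)} (f : V → ℕ)
    (hf : ∀ e ∈ A, f e.1 < f e.2) : IsDAG A := by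
  intro v hv
  have key : ∀ {a b : V}, Relation.TransGen (ArcAdj A) a b → f a < f b := by
    intro a b h
    induction h with
    | single h' => exact hf _ h'
    | tail _ h' ih => exact ih.trans (hf _ h')
  exact absurd (key hv) (lt_irrefl _)

omit [Fintype V] [DecidableEq V] in
lemma isDAG_subset {A B : Finset (V × V)} (hBA : B ⊆ A) (h : IsDAG A) : IsDAG B := by
  intro v hv
  exact h v (Relation.TransGen.mono (fun a b hab => hBA hab) _ _ hv)

/-- level function for the reduction DAG -/
def redLevel : RedV n m → ℕ :=
  Sum.elim (fun p => if p.2 = 0 then 3 else if p.2 = 1 ∨ p.2 = 2 then 2 else 4)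
    (fun p => if p.2 = 0 then 1 else 0)

lemma isDAG_redArcs : IsDAG (redArcs n m φ) := by
  apply isDAG_of_level redLevel
  intro e he
  rw [mem_redArcs] at he
  rcases he with ⟨x, h1, h2⟩ | ⟨x, h1, h2⟩ | ⟨c, i, hi, h1, h2⟩ | ⟨c, x, j, h1, h2⟩
  · rcases h1 with h1 | h1 <;> rw [h1, h2] <;> simp [redLevel]
  · rcases h2 with h2 | h2 | h2 <;> rw [h1, h2] <;> simp [redLevel] <;> decide
  · rw [h1, h2]
    simp [redLevel, hi]
  · rcases h2 with ⟨_, h2⟩ | ⟨_, h2⟩ <;> rw [h1, h2] <;> simp [redLevel] <;> decide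


-- convenient abbreviations
lemma redAdj_target_c0 {a : RedV n m} {c : Fin m} :
    RedAdj n m φ a (Sum.inr (c, 0)) ↔ ∃ i : Fin 5, i ≠ 0 ∧ a = Sum.inr (c, i) := by
  constructor
  · rintro (⟨x, h1, h2⟩ | ⟨x, h1, h2 | h2 | h2⟩ | ⟨c', i, hi, h1, h2⟩ | ⟨c', x, j, h1, ⟨_, h2⟩ | ⟨_, h2⟩⟩)
    all_goals first
      | (exfalso; exact Sum.inr_ne_inl h2)
      | (rw [Sum.inr.injEq, Prod.mk.injEq] at h2
         obtain ⟨h2a, -⟩ := h2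
         subst h2a
         exact ⟨i, hi, h1⟩)
  · rintro ⟨i, hi, rfl⟩
    exact Or.inr (Or.inr (Or.inl ⟨c, i, hi, rfl, rfl⟩))

lemma redAdj_source_c0 {b : RedV n m} {c : Fin m} :
    RedAdj n m φ (Sum.inr (c, 0)) b ↔ ∃ j : Fin 3, b = litV n m (φ c j) := by
  constructor
  · rintro (⟨x, h1 | h1, h2⟩ | ⟨x, h1, h2⟩ | ⟨c', i, hi, h1, h2⟩ | ⟨c', x, j, h1, ⟨hj, h2⟩ | ⟨hj, h2⟩⟩)
    · exfalso; simp at h1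
    · exfalso; simp at h1
    · exfalso; simp at h1
    · exfalso
      rw [Sum.inr.injEq, Prod.mk.injEq] at h1
      exact hi h1.2.symm
    · rw [Sum.inr.injEq, Prod.mk.injEq] at h1
      obtain ⟨rfl, -⟩ := h1
      exact ⟨j, by simp [litV, hj, h2]⟩
    · rw [Sum.inr.injEq, Prod.mk.injEq] at h1
      obtain ⟨rfl, -⟩ := h1
      exact ⟨j, by simp [litV, hj, h2]⟩
  · rintro ⟨j, rfl⟩
    rcases hb : (φ c j) with ⟨x, bb⟩
    refine Or.inr (Or.inr (Or.inr ⟨c, x, j, rfl, ?_⟩))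
    cases bb
    · exact Or.inr ⟨hb, by simp [litV, hb]⟩
    · exact Or.inl ⟨hb, by simp [litV, hb]⟩

lemma redAdj_target_x0 {a : RedV n m} {x : Fin n} :
    RedAdj n m φ a (Sum.inl (x, 0)) ↔ a = Sum.inl (x, 1) ∨ a = Sum.inl (x, 2) := by
  constructor
  · rintro (⟨y, h1, h2⟩ | ⟨y, h1, h2 | h2 | h2⟩ | ⟨c', i, hi, h1, h2⟩ | ⟨c', y, j, h1, ⟨_, h2⟩ | ⟨_, h2⟩⟩) <;>
      simp_all
  · rintro (rfl | rfl)
    · exact Or.inl ⟨x, Or.inl rfl, rfl⟩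
    · exact Or.inl ⟨x, Or.inr rfl, rfl⟩

lemma redAdj_source_x0 {b : RedV n m} {x : Fin n} :
    RedAdj n m φ (Sum.inl (x, 0)) b ↔ b = Sum.inl (x, 3) ∨ b = Sum.inl (x, 4) ∨ b = Sum.inl (x, 5) := by
  constructor
  · rintro (⟨y, h1 | h1, h2⟩ | ⟨y, h1, h2⟩ | ⟨c', i, hi, h1, h2⟩ | ⟨c', y, j, h1, ⟨_, h2⟩ | ⟨_, h2⟩⟩) <;>
      simp_all
  · rintro (rfl | rfl | rfl) <;> exact Or.inr (Or.inl ⟨x, rfl, by simp⟩)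

lemma filter_in_c0 (c : Fin m) :
    (redArcs n m φ).filter (fun e => e.2 = Sum.inr (c, 0)) =
      ((Finset.univ : Finset (Fin 5)).filter (· ≠ 0)).image
        (fun i => (Sum.inr (c, i), Sum.inr (c, 0))) := by
  ext ⟨a, b⟩
  simp only [Finset.mem_filter, Finset.mem_image, mem_redArcs, Finset.mem_univ, true_and]
  constructor
  · rintro ⟨hadj, rfl⟩
    obtain ⟨i, hi, rfl⟩ := redAdj_target_c0.1 hadj
    exact ⟨i, hi, rfl⟩
  · rintro ⟨i, hi, heq⟩
    rw [Prod.mk.injEq] at heq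
    obtain ⟨rfl, rfl⟩ := heq
    exact ⟨redAdj_target_c0.2 ⟨i, hi, rfl⟩, rfl⟩

lemma inDeg_c0 (c : Fin m) : inDeg (redArcs n m φ) (Sum.inr (c, 0)) = 4 := by
  unfold inDeg
  rw [filter_in_c0, Finset.card_image_of_injective]
  · decide
  · intro i j h
    simp only [Prod.mk.injEq, Sum.inr.injEq] at h
    exact h.1.2

lemma filter_out_c0 (c : Fin m) :
    (redArcs n m φ).filter (fun e => e.1 = Sum.inr (c, 0)) =
      (Finset.univ : Finset (Fin 3)).image
        (fun j => (Sum.inr (c, 0), litV n m (φ c j))) := by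
  ext ⟨a, b⟩
  simp only [Finset.mem_filter, Finset.mem_image, mem_redArcs, Finset.mem_univ, true_and]
  constructor
  · rintro ⟨hadj, rfl⟩
    obtain ⟨j, rfl⟩ := redAdj_source_c0.1 hadj
    exact ⟨j, rfl⟩
  · rintro ⟨j, heq⟩
    rw [Prod.mk.injEq] at heq
    obtain ⟨rfl, rfl⟩ := heq
    exact ⟨redAdj_source_c0.2 ⟨j, rfl⟩, rfl⟩

lemma outDeg_c0 (hdistinct : ∀ c : Fin m, Function.Injective (φ c)) (c : Fin m) :
    outDeg (redArcs n m φ) (Sum.inr (c, 0)) = 3 := by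
  unfold outDeg
  rw [filter_out_c0, Finset.card_image_of_injective]
  · simp
  · intro i j h
    simp only [Prod.mk.injEq, true_and] at h
    exact hdistinct c (litV_inj h)

lemma filter_in_x0 (x : Fin n) :
    (redArcs n m φ).filter (fun e => e.2 = Sum.inl (x, 0)) =
      {((Sum.inl (x, 1) : RedV n m), Sum.inl (x, 0)), (Sum.inl (x, 2), Sum.inl (x, 0))} := by
  ext ⟨a, b⟩
  simp only [Finset.mem_filter, mem_redArcs, Finset.mem_insert, Finset.mem_singleton]
  constructor
  · rintro ⟨hadj, rfl⟩
    rcases redAdj_target_x0.1 hadj with rfl | rfl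
    · exact Or.inl rfl
    · exact Or.inr rfl
  · rintro (heq | heq) <;> rw [Prod.mk.injEq] at heq <;> obtain ⟨rfl, rfl⟩ := heq
    · exact ⟨redAdj_target_x0.2 (Or.inl rfl), rfl⟩
    · exact ⟨redAdj_target_x0.2 (Or.inr rfl), rfl⟩

lemma inDeg_x0 (x : Fin n) : inDeg (redArcs n m φ) (Sum.inl (x, 0)) = 2 := by
  unfold inDeg
  rw [filter_in_x0]
  rw [Finset.card_insert_of_notMem (by simp), Finset.card_singleton]

lemma filter_out_x0 (x : Fin n) :
    (redArcs n m φ).filter (fun e => e.1 = Sum.inl (x, 0)) =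
      {((Sum.inl (x, 0) : RedV n m), Sum.inl (x, 3)), (Sum.inl (x, 0), Sum.inl (x, 4)),
        (Sum.inl (x, 0), Sum.inl (x, 5))} := by
  ext ⟨a, b⟩
  simp only [Finset.mem_filter, mem_redArcs, Finset.mem_insert, Finset.mem_singleton]
  constructor
  · rintro ⟨hadj, rfl⟩
    rcases redAdj_source_x0.1 hadj with rfl | rfl | rfl
    · exact Or.inl rfl
    · exact Or.inr (Or.inl rfl)
    · exact Or.inr (Or.inr rfl)
  · rintro (heq | heq | heq) <;> rw [Prod.mk.injEq] at heq <;> obtain ⟨rfl, rfl⟩ := heq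
    · exact ⟨redAdj_source_x0.2 (Or.inl rfl), rfl⟩
    · exact ⟨redAdj_source_x0.2 (Or.inr (Or.inl rfl)), rfl⟩
    · exact ⟨redAdj_source_x0.2 (Or.inr (Or.inr rfl)), rfl⟩

lemma outDeg_x0 (x : Fin n) : outDeg (redArcs n m φ) (Sum.inl (x, 0)) = 3 := by
  unfold outDeg
  rw [filter_out_x0]
  rw [Finset.card_insert_of_notMem (by simp), Finset.card_insert_of_notMem (by simp),
    Finset.card_singleton]


omit [Fintype V] in
lemma filter_sdiff' (A B : Finset (V × V)) (P : V × V → Prop) [DecidablePred P] :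
    (A \ B).filter P = A.filter P \ B.filter P := by
  ext e
  simp only [Finset.mem_filter, Finset.mem_sdiff]
  tauto

omit [Fintype V] in
lemma inDeg_sdiff {A B : Finset (V × V)} (hBA : B ⊆ A) (v : V) :
    inDeg (A \ B) v = inDeg A v - (B.filter fun e => e.2 = v).card := by
  unfold inDeg
  rw [filter_sdiff', Finset.card_sdiff_of_subset (Finset.filter_subset_filter _ hBA)]

omit [Fintype V] in
lemma outDeg_sdiff {A B : Finset (V × V)} (hBA : B ⊆ A) (v : V) :
    outDeg (A \ B) v = outDeg A v - (B.filter fun e => e.1 = v).card := by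
  unfold outDeg
  rw [filter_sdiff', Finset.card_sdiff_of_subset (Finset.filter_subset_filter _ hBA)]

-- shape facts for arcs of the reduction graph
lemma arc_from_c0 {e : RedV n m × RedV n m} {c : Fin m} (he : e ∈ redArcs n m φ)
    (h : e.1 = Sum.inr (c, 0)) : ∃ j, e.2 = litV n m (φ c j) := by
  have := mem_redArcs.1 he
  rw [h] at this
  exact redAdj_source_c0.1 this

lemma arc_to_c0 {e : RedV n m × RedV n m} {c : Fin m} (he : e ∈ redArcs n m φ)
    (h : e.2 = Sum.inr (c, 0)) : ∃ i : Fin 5, i ≠ 0 ∧ e.1 = Sum.inr (c, i) := by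
  have := mem_redArcs.1 he
  rw [h] at this
  exact redAdj_target_c0.1 this

lemma arc_from_x0 {e : RedV n m × RedV n m} {x : Fin n} (he : e ∈ redArcs n m φ)
    (h : e.1 = Sum.inl (x, 0)) :
    e.2 = Sum.inl (x, 3) ∨ e.2 = Sum.inl (x, 4) ∨ e.2 = Sum.inl (x, 5) := by
  have := mem_redArcs.1 he
  rw [h] at this
  exact redAdj_source_x0.1 this

lemma arc_to_x0 {e : RedV n m × RedV n m} {x : Fin n} (he : e ∈ redArcs n m φ)
    (h : e.2 = Sum.inl (x, 0)) : e.1 = Sum.inl (x, 1) ∨ e.1 = Sum.inl (x, 2) := by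
  have := mem_redArcs.1 he
  rw [h] at this
  exact redAdj_target_x0.1 this

lemma litV_idx_ne_zero (ℓ : Fin n × Bool) : (if ℓ.2 then (1 : Fin 6) else 2) ≠ 0 := by
  cases ℓ.2 <;> decide

/-- Forward direction of the reduction. -/
lemma forward_direction (hdistinct : ∀ c : Fin m, Function.Injective (φ c))
    {B : Finset (RedV n m × RedV n m)} (hBA : B ⊆ redArcs n m φ)
    (hcard : B.card ≤ 2 * m + n) (hfun : IsFunnel (redArcs n m φ \ B)) :
    ∃ σ : Fin n → Bool, ∀ c : Fin m, ∃ j : Fin 3, σ (φ c j).1 = (φ c j).2 := by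
  classical
  set A := redArcs n m φ with hA
  have hdagA : IsDAG A := isDAG_redArcs
  have hdag' : IsDAG (A \ B) := isDAG_subset (Finset.sdiff_subset) hdagA
  have hsub' : (A \ B) ⊆ A := Finset.sdiff_subset
  -- no merge-fork in the funnel
  have hcond : ∀ v w : RedV n m, Relation.ReflTransGen (ArcAdj (A \ B)) v w →
      2 ≤ inDeg (A \ B) v → 2 ≤ outDeg (A \ B) w → False := by
    intro v w hp hi ho
    exact not_funnel_of_merge_fork hdag' hi hp ho hfun
  -- abbreviations for deleted-arc counts
  set cin : Fin m → ℕ := fun c => (B.filter fun e => e.2 = Sum.inr (c, 0)).card with hcin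
  set cout : Fin m → ℕ := fun c => (B.filter fun e => e.1 = Sum.inr (c, 0)).card with hcout
  set xin : Fin n → ℕ := fun x => (B.filter fun e => e.2 = Sum.inl (x, 0)).card with hxin
  set xout : Fin n → ℕ := fun x => (B.filter fun e => e.1 = Sum.inl (x, 0)).card with hxout
  have hinc0 : ∀ c, inDeg (A \ B) (Sum.inr (c, 0)) = 4 - cin c := by
    intro c; rw [inDeg_sdiff hBA, hA, inDeg_c0]
  have houtc0 : ∀ c, outDeg (A \ B) (Sum.inr (c, 0)) = 3 - cout c := by
    intro c; rw [outDeg_sdiff hBA, hA, outDeg_c0 hdistinct]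
  have hinx0 : ∀ x, inDeg (A \ B) (Sum.inl (x, 0)) = 2 - xin x := by
    intro x; rw [inDeg_sdiff hBA, hA, inDeg_x0]
  have houtx0 : ∀ x, outDeg (A \ B) (Sum.inl (x, 0)) = 3 - xout x := by
    intro x; rw [outDeg_sdiff hBA, hA, outDeg_x0]
  -- per-clause and per-variable deleted arc sets
  set T : Fin m → Finset (RedV n m × RedV n m) :=
    fun c => B.filter (fun e => e.1 = Sum.inr (c, 0) ∨ e.2 = Sum.inr (c, 0)) with hT
  set U : Fin n → Finset (RedV n m × RedV n m) :=
    fun x => B.filter (fun e => e.1 = Sum.inl (x, 0) ∨ e.2 = Sum.inl (x, 0)) with hU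
  have hTcard : ∀ c, (T c).card = cout c + cin c := by
    intro c
    rw [hT]
    simp only []
    rw [Finset.filter_or, Finset.card_union_of_disjoint]
    rw [Finset.disjoint_left]
    rintro e he1 he2
    rw [Finset.mem_filter] at he1 he2
    obtain ⟨j, hj⟩ := arc_from_c0 (hBA he1.1) he1.2
    rw [he2.2] at hj
    simp [litV] at hj
  have hUcard : ∀ x, (U x).card = xout x + xin x := by
    intro x
    rw [hU]
    simp only []
    rw [Finset.filter_or, Finset.card_union_of_disjoint]
    rw [Finset.disjoint_left]
    rintro e he1 he2
    rw [Finset.mem_filter] at he1 he2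
    rcases arc_from_x0 (hBA he1.1) he1.2 with hj | hj | hj <;>
      rw [he2.2] at hj <;>
      · rw [Sum.inl.injEq, Prod.mk.injEq] at hj
        exact absurd hj.2 (by decide)
  -- per-clause lower bound
  have hclause : ∀ c, 3 ≤ cin c ∨ 2 ≤ cout c := by
    intro c
    by_contra hcon
    push_neg at hcon
    refine hcond (Sum.inr (c, 0)) (Sum.inr (c, 0)) Relation.ReflTransGen.refl ?_ ?_
    · rw [hinc0]; omega
    · rw [houtc0]; omega
  have hvar : ∀ x, 1 ≤ xin x ∨ 2 ≤ xout x := by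
    intro x
    by_contra hcon
    push_neg at hcon
    refine hcond (Sum.inl (x, 0)) (Sum.inl (x, 0)) Relation.ReflTransGen.refl ?_ ?_
    · rw [hinx0]; omega
    · rw [houtx0]; omega
  have hTlow : ∀ c, 2 ≤ (T c).card := by
    intro c; rw [hTcard]; rcases hclause c with h | h <;> omega
  have hUlow : ∀ x, 1 ≤ (U x).card := by
    intro x; rw [hUcard]; rcases hvar x with h | h <;> omega
  -- the family is pairwise disjoint
  set g : Fin m ⊕ Fin n → Finset (RedV n m × RedV n m) :=
    fun i => Sum.elim T U i with hg
  have hdisj : ∀ i ∈ (Finset.univ : Finset (Fin m ⊕ Fin n)), ∀ j ∈ Finset.univ,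
      i ≠ j → Disjoint (g i) (g j) := by
    rintro i - j - hij
    rw [Finset.disjoint_left]
    intro e hei hej
    apply hij
    rcases i with c | x <;> rcases j with c' | x' <;>
      simp only [hg, Sum.elim_inl, Sum.elim_inr, hT, hU, Finset.mem_filter] at hei hej
    · -- clause vs clause
      congr 1
      rcases hei.2 with h1 | h1 <;> rcases hej.2 with h2 | h2
      · rw [h1] at h2
        rw [Sum.inr.injEq, Prod.mk.injEq] at h2
        exact h2.1
      · obtain ⟨j0, hj0⟩ := arc_from_c0 (hBA hei.1) h1
        rw [h2] at hj0; exact absurd hj0 (by simp [litV])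
      · obtain ⟨j0, hj0⟩ := arc_from_c0 (hBA hej.1) h2
        rw [h1] at hj0; exact absurd hj0 (by simp [litV])
      · rw [h1] at h2
        rw [Sum.inr.injEq, Prod.mk.injEq] at h2
        rw [h2.1]
    · -- clause vs variable : impossible
      exfalso
      rcases hei.2 with h1 | h1 <;> rcases hej.2 with h2 | h2
      · rw [h1] at h2; exact nomatch h2
      · obtain ⟨j0, hj0⟩ := arc_from_c0 (hBA hei.1) h1
        rw [h2] at hj0
        rw [litV, Sum.inl.injEq, Prod.mk.injEq] at hj0
        exact litV_idx_ne_zero (φ c j0) hj0.2.symm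
      · rcases arc_from_x0 (hBA hei.1) h2 with hj | hj | hj <;>
          rw [h1] at hj <;> exact nomatch hj
      · rw [h1] at h2; exact nomatch h2
    · -- variable vs clause : impossible
      exfalso
      rcases hei.2 with h1 | h1 <;> rcases hej.2 with h2 | h2
      · rw [h1] at h2; exact nomatch h2
      · rcases arc_from_x0 (hBA hei.1) h1 with hj | hj | hj <;>
          rw [h2] at hj <;> exact nomatch hj
      · obtain ⟨j0, hj0⟩ := arc_from_c0 (hBA hej.1) h2
        rw [h1] at hj0
        rw [litV, Sum.inl.injEq, Prod.mk.injEq] at hj0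
        exact litV_idx_ne_zero (φ c' j0) hj0.2.symm
      · rw [h1] at h2; exact nomatch h2
    · -- variable vs variable
      congr 1
      rcases hei.2 with h1 | h1 <;> rcases hej.2 with h2 | h2
      · rw [h1] at h2
        rw [Sum.inl.injEq, Prod.mk.injEq] at h2
        exact h2.1
      · rcases arc_from_x0 (hBA hei.1) h1 with hj | hj | hj <;>
          rw [h2] at hj <;>
          · rw [Sum.inl.injEq, Prod.mk.injEq] at hj
            exact absurd hj.2 (by decide)
      · rcases arc_from_x0 (hBA hej.1) h2 with hj | hj | hj <;>
          rw [h1] at hj <;>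
          · rw [Sum.inl.injEq, Prod.mk.injEq] at hj
            exact absurd hj.2 (by decide)
      · rw [h1] at h2
        rw [Sum.inl.injEq, Prod.mk.injEq] at h2
        exact h2.1
  -- counting
  have hbiU : (Finset.univ.biUnion g) ⊆ B := by
    intro e he
    rw [Finset.mem_biUnion] at he
    obtain ⟨i, -, hei⟩ := he
    rcases i with c | x <;>
      simp only [hg, Sum.elim_inl, Sum.elim_inr, hT, hU, Finset.mem_filter] at hei <;>
      exact hei.1
  have hsum : ∑ i : Fin m ⊕ Fin n, (g i).card ≤ B.card := by
    rw [← Finset.card_biUnion hdisj]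
    exact Finset.card_le_card hbiU
  set l : Fin m ⊕ Fin n → ℕ := Sum.elim (fun _ => 2) (fun _ => 1) with hl
  have hlsum : ∑ i : Fin m ⊕ Fin n, l i = 2 * m + n := by
    rw [Fintype.sum_sum_type]
    simp [hl, Finset.sum_const, mul_comm]
  have hle : ∀ i ∈ (Finset.univ : Finset (Fin m ⊕ Fin n)), l i ≤ (g i).card := by
    rintro (c | x) -
    · exact hTlow c
    · exact hUlow x
  have heq : ∀ i ∈ (Finset.univ : Finset (Fin m ⊕ Fin n)), l i = (g i).card := by
    rw [← Finset.sum_eq_sum_iff_of_le hle]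
    have h1 : ∑ i : Fin m ⊕ Fin n, l i ≤ ∑ i : Fin m ⊕ Fin n, (g i).card :=
      Finset.sum_le_sum hle
    omega
  have hTex : ∀ c, cin c = 0 ∧ cout c = 2 := by
    intro c
    have h2 := (heq (Sum.inl c) (Finset.mem_univ _)).symm
    simp only [hg, Sum.elim_inl, hl] at h2
    rw [hTcard] at h2
    rcases hclause c with h | h <;> omega
  have hUex : ∀ x, xin x = 1 ∧ xout x = 0 := by
    intro x
    have h2 := (heq (Sum.inr x) (Finset.mem_univ _)).symm
    simp only [hg, Sum.elim_inr, hl] at h2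
    rw [hUcard] at h2
    rcases hvar x with h | h <;> omega
  -- define the assignment
  refine ⟨fun x => if (Sum.inl (x, 1), (Sum.inl (x, 0) : RedV n m)) ∈ B then true else false, ?_⟩
  intro c
  -- the unique remaining out-arc of c_0
  have houtone : outDeg (A \ B) (Sum.inr (c, 0)) = 1 := by
    rw [houtc0, (hTex c).2]
  have hne : ((A \ B).filter fun e => e.1 = Sum.inr (c, 0)).Nonempty := by
    rw [← Finset.card_pos]
    unfold outDeg at houtone
    omega
  obtain ⟨e, he⟩ := hne
  rw [Finset.mem_filter] at he
  obtain ⟨heAB, he1⟩ := he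
  rw [Finset.mem_sdiff] at heAB
  obtain ⟨heA, heB⟩ := heAB
  obtain ⟨j, hj⟩ := arc_from_c0 heA he1
  refine ⟨j, ?_⟩
  rcases hφ : φ c j with ⟨x, b⟩
  rw [hφ] at hj
  simp only [litV] at hj
  -- the in-arc of x_0 corresponding to the chosen literal must be deleted
  have hdel : ((Sum.inl (x, if b then 1 else 2) : RedV n m), (Sum.inl (x, 0) : RedV n m)) ∈ B := by
    by_contra hnd
    have harc2 : ((Sum.inl (x, if b then 1 else 2) : RedV n m),
        (Sum.inl (x, 0) : RedV n m)) ∈ A \ B := by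
      rw [Finset.mem_sdiff]
      refine ⟨mem_redArcs.2 (redAdj_target_x0.2 ?_), hnd⟩
      cases b
      · exact Or.inr rfl
      · exact Or.inl rfl
    have harc1 : ((Sum.inr (c, 0) : RedV n m),
        (Sum.inl (x, if b then 1 else 2) : RedV n m)) ∈ A \ B := by
      rw [Finset.mem_sdiff]
      constructor
      · rw [← he1, ← hj, Prod.mk.eta]; exact heA
      · rw [← he1, ← hj, Prod.mk.eta]; exact heB
    refine hcond (Sum.inr (c, 0)) (Sum.inl (x, 0)) ?_ ?_ ?_
    · exact Relation.ReflTransGen.head harc1 (Relation.ReflTransGen.single harc2)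
    · rw [hinc0, (hTex c).1]; omega
    · rw [houtx0, (hUex x).2]; omega
  -- conclude the assignment satisfies the literal
  show (if ((Sum.inl (x, 1) : RedV n m), (Sum.inl (x, 0) : RedV n m)) ∈ B then true else false) = b
  cases b
  · -- negative literal: vertex (x,2) arc is deleted; show the (x,1) arc is not in B
    norm_num at hdel
    have hnot : ((Sum.inl (x, 1) : RedV n m), (Sum.inl (x, 0) : RedV n m)) ∉ B := by
      intro hmem
      have h1 : ((Sum.inl (x, 1) : RedV n m), (Sum.inl (x, 0) : RedV n m)) ∈
          B.filter fun e => e.2 = Sum.inl (x, 0) := Finset.mem_filter.2 ⟨hmem, rfl⟩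
      have h2 : ((Sum.inl (x, 2) : RedV n m), (Sum.inl (x, 0) : RedV n m)) ∈
          B.filter fun e => e.2 = Sum.inl (x, 0) := Finset.mem_filter.2 ⟨hdel, rfl⟩
      have hgt : 1 < xin x := Finset.one_lt_card.2 ⟨_, h1, _, h2, by simp⟩
      have := (hUex x).1
      omega
    simp [hnot]
  · norm_num at hdel
    simp [hdel]

/-- the two indices other than a given one -/
def oth1 (j : Fin 3) : Fin 3 := if j = 0 then 1 else 0
def oth2 (j : Fin 3) : Fin 3 := if j = 2 then 1 else 2

lemma oth_spec : ∀ j k : Fin 3, j ≠ k ↔ (j = oth1 k ∨ j = oth2 k) := by decide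

/-- Backward direction of the reduction. -/
lemma backward_direction (hdistinct : ∀ c : Fin m, Function.Injective (φ c))
    (σ : Fin n → Bool) (hsat : ∀ c : Fin m, ∃ j : Fin 3, σ (φ c j).1 = (φ c j).2) :
    ∃ B ⊆ redArcs n m φ, B.card ≤ 2 * m + n ∧ IsFunnel (redArcs n m φ \ B) := by
  classical
  set jc : Fin m → Fin 3 := fun c => (hsat c).choose with hjcdef
  have hjc : ∀ c, σ (φ c (jc c)).1 = (φ c (jc c)).2 := fun c => (hsat c).choose_spec
  set B : Finset (RedV n m × RedV n m) :=
    (Finset.univ.image fun x : Fin n => (litV n m (x, σ x), (Sum.inl (x, 0) : RedV n m))) ∪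
    (Finset.univ.image fun c : Fin m =>
      ((Sum.inr (c, 0) : RedV n m), litV n m (φ c (oth1 (jc c))))) ∪
    (Finset.univ.image fun c : Fin m =>
      ((Sum.inr (c, 0) : RedV n m), litV n m (φ c (oth2 (jc c))))) with hBdef
  have hmemB : ∀ e : RedV n m × RedV n m, e ∈ B ↔
      ((∃ x, e = (litV n m (x, σ x), Sum.inl (x, 0))) ∨
       ∃ c j, j ≠ jc c ∧ e = (Sum.inr (c, 0), litV n m (φ c j))) := by
    intro e
    rw [hBdef]
    simp only [Finset.mem_union, Finset.mem_image, Finset.mem_univ, true_and]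
    constructor
    · rintro ((⟨x, hx⟩ | ⟨c, hc⟩) | ⟨c, hc⟩)
      · exact Or.inl ⟨x, hx.symm⟩
      · exact Or.inr ⟨c, oth1 (jc c), (oth_spec _ _).2 (Or.inl rfl), hc.symm⟩
      · exact Or.inr ⟨c, oth2 (jc c), (oth_spec _ _).2 (Or.inr rfl), hc.symm⟩
    · rintro (⟨x, hx⟩ | ⟨c, j, hj, he⟩)
      · exact Or.inl (Or.inl ⟨x, hx.symm⟩)
      · rcases (oth_spec j (jc c)).1 hj with rfl | rfl
        · exact Or.inl (Or.inr ⟨c, he.symm⟩)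
        · exact Or.inr ⟨c, he.symm⟩
  have hBA : B ⊆ redArcs n m φ := by
    intro e he
    rw [hmemB] at he
    rcases he with ⟨x, rfl⟩ | ⟨c, j, hj, rfl⟩
    · refine mem_redArcs.2 (redAdj_target_x0.2 ?_)
      cases hσ : σ x
      · exact Or.inr (by simp [litV, hσ])
      · exact Or.inl (by simp [litV, hσ])
    · exact mem_redArcs.2 (redAdj_source_c0.2 ⟨j, rfl⟩)
  have hBcard : B.card ≤ 2 * m + n := by
    calc B.card ≤ _ := Finset.card_union_le _ _
    _ ≤ _ + _ := Nat.add_le_add_right (Finset.card_union_le _ _) _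
    _ ≤ 2 * m + n := by
        have h1 := Finset.card_image_le (s := (Finset.univ : Finset (Fin n)))
          (f := fun x => (litV n m (x, σ x), (Sum.inl (x, 0) : RedV n m)))
        have h2 := Finset.card_image_le (s := (Finset.univ : Finset (Fin m)))
          (f := fun c => ((Sum.inr (c, 0) : RedV n m), litV n m (φ c (oth1 (jc c)))))
        have h3 := Finset.card_image_le (s := (Finset.univ : Finset (Fin m)))
          (f := fun c => ((Sum.inr (c, 0) : RedV n m), litV n m (φ c (oth2 (jc c)))))
        simp only [Finset.card_univ, Fintype.card_fin] at h1 h2 h3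
        omega
  refine ⟨B, hBA, hBcard, ?_⟩
  set A' := redArcs n m φ \ B with hA'def
  -- characterization of the remaining arcs
  have hadj : ∀ u v : RedV n m, (u, v) ∈ A' ↔
      ((∃ x, σ x = false ∧ u = Sum.inl (x, 1) ∧ v = Sum.inl (x, 0)) ∨
       (∃ x, σ x = true ∧ u = Sum.inl (x, 2) ∧ v = Sum.inl (x, 0)) ∨
       (∃ x, u = Sum.inl (x, 0) ∧
          (v = Sum.inl (x, 3) ∨ v = Sum.inl (x, 4) ∨ v = Sum.inl (x, 5))) ∨
       (∃ c, ∃ i : Fin 5, i ≠ 0 ∧ u = Sum.inr (c, i) ∧ v = Sum.inr (c, 0)) ∨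
       (∃ c, u = Sum.inr (c, 0) ∧ v = litV n m (φ c (jc c)))) := by
    intro u v
    rw [hA'def, Finset.mem_sdiff, mem_redArcs, hmemB]
    constructor
    · rintro ⟨hadj0, hnB⟩
      rw [not_or] at hnB
      obtain ⟨hn1, hn2⟩ := hnB
      rcases hadj0 with ⟨x, h1 | h1, h2⟩ | ⟨x, h1, h2⟩ | ⟨c, i, hi, h1, h2⟩ |
          ⟨c, x, j, h1, ⟨hj, h2⟩ | ⟨hj, h2⟩⟩
      · subst h1; subst h2
        cases hσ : σ x
        · exact Or.inl ⟨x, hσ, rfl, rfl⟩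
        · exact absurd ⟨x, by simp [litV, hσ]⟩ hn1
      · subst h1; subst h2
        cases hσ : σ x
        · exact absurd ⟨x, by simp [litV, hσ]⟩ hn1
        · exact Or.inr (Or.inl ⟨x, hσ, rfl, rfl⟩)
      · exact Or.inr (Or.inr (Or.inl ⟨x, h1, h2⟩))
      · exact Or.inr (Or.inr (Or.inr (Or.inl ⟨c, i, hi, h1, h2⟩)))
      · subst h1; subst h2
        by_cases hje : j = jc c
        · subst hje
          exact Or.inr (Or.inr (Or.inr (Or.inr ⟨c, rfl, by simp [litV, hj]⟩)))
        · exact absurd ⟨c, j, hje, by simp [litV, hj]⟩ hn2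
      · subst h1; subst h2
        by_cases hje : j = jc c
        · subst hje
          exact Or.inr (Or.inr (Or.inr (Or.inr ⟨c, rfl, by simp [litV, hj]⟩)))
        · exact absurd ⟨c, j, hje, by simp [litV, hj]⟩ hn2
    · intro h
      constructor
      · rcases h with ⟨x, hσ, rfl, rfl⟩ | ⟨x, hσ, rfl, rfl⟩ | ⟨x, rfl, hv⟩ |
            ⟨c, i, hi, rfl, rfl⟩ | ⟨c, rfl, rfl⟩
        · exact Or.inl ⟨x, Or.inl rfl, rfl⟩
        · exact Or.inl ⟨x, Or.inr rfl, rfl⟩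
        · exact Or.inr (Or.inl ⟨x, rfl, hv⟩)
        · exact Or.inr (Or.inr (Or.inl ⟨c, i, hi, rfl, rfl⟩))
        · exact redAdj_source_c0.2 ⟨jc c, rfl⟩
      · rw [not_or]
        constructor
        · rintro ⟨x', hx'⟩
          rcases h with ⟨x, hσ, hu, hv⟩ | ⟨x, hσ, hu, hv⟩ | ⟨x, hu, hv | hv | hv⟩ |
              ⟨c, i, hi, hu, hv⟩ | ⟨c, hu, hv⟩ <;>
            rw [Prod.mk.injEq] at hx' <;> obtain ⟨hx1, hx2⟩ := hx' <;> subst hu <;> subst hv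
          · rw [Sum.inl.injEq, Prod.mk.injEq] at hx2
            obtain ⟨rfl, -⟩ := hx2
            rw [hσ] at hx1
            exact absurd hx1 (by simp [litV])
          · rw [Sum.inl.injEq, Prod.mk.injEq] at hx2
            obtain ⟨rfl, -⟩ := hx2
            rw [hσ] at hx1
            exact absurd hx1 (by simp [litV])
          · rw [Sum.inl.injEq, Prod.mk.injEq] at hx2
            exact absurd hx2.2 (by decide)
          · rw [Sum.inl.injEq, Prod.mk.injEq] at hx2
            exact absurd hx2.2 (by decide)
          · rw [Sum.inl.injEq, Prod.mk.injEq] at hx2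
            exact absurd hx2.2 (by decide)
          · exact absurd hx1 (by simp [litV])
          · exact absurd hx1 (by simp [litV])
        · rintro ⟨c', j', hj', he'⟩
          rcases h with ⟨x, hσ, hu, hv⟩ | ⟨x, hσ, hu, hv⟩ | ⟨x, hu, hv | hv | hv⟩ |
              ⟨c, i, hi, hu, hv⟩ | ⟨c, hu, hv⟩ <;>
            rw [Prod.mk.injEq] at he' <;> obtain ⟨he1, he2⟩ := he' <;> subst hu <;> subst hv
          · exact nomatch he1
          · exact nomatch he1
          · exact nomatch he1
          · exact nomatch he1
          · exact nomatch he1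
          · exact absurd he2 (by simp [litV])
          · rw [Sum.inr.injEq, Prod.mk.injEq] at he1
            obtain ⟨rfl, -⟩ := he1
            have : j' = jc c := hdistinct c (litV_inj he2.symm)
            exact hj' this
  -- the chosen literal vertex of each clause is a sink
  have hLout : ∀ (c : Fin m) (w : RedV n m), (litV n m (φ c (jc c)), w) ∉ A' := by
    intro c w hw
    rcases hp0 : φ c (jc c) with ⟨x0, b0⟩
    have hσ0 : σ x0 = b0 := by
      have := hjc c
      rw [hp0] at this
      exact this
    rw [hp0] at hw
    have hd : litV n m (x0, b0) = Sum.inl (x0, if b0 then (1 : Fin 6) else 2) := rfl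
    rw [hd] at hw
    rcases (hadj _ _).1 hw with ⟨y, hσ3, h1, h2⟩ | ⟨y, hσ3, h1, h2⟩ | ⟨y, h1, h2⟩ |
        ⟨c3, i3, hi3, h1, h2⟩ | ⟨c3, h1, h2⟩
    · rw [Sum.inl.injEq, Prod.mk.injEq] at h1
      obtain ⟨rfl, h1b⟩ := h1
      cases b0
      · exact absurd h1b (by decide)
      · rw [hσ0] at hσ3
        exact nomatch hσ3
    · rw [Sum.inl.injEq, Prod.mk.injEq] at h1
      obtain ⟨rfl, h1b⟩ := h1
      cases b0
      · rw [hσ0] at hσ3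
        exact nomatch hσ3
      · exact absurd h1b (by decide)
    · rw [Sum.inl.injEq, Prod.mk.injEq] at h1
      obtain ⟨rfl, h1b⟩ := h1
      cases b0 <;> exact absurd h1b (by decide)
    · exact nomatch h1
    · exact nomatch h1
  -- classification of source-sink paths in the pruned graph
  have harc_of_chain : ∀ (a b : RedV n m) (t : List (RedV n m)),
      List.Chain' (ArcAdj A') (a :: b :: t) → (a, b) ∈ A' ∧ List.Chain' (ArcAdj A') (b :: t) :=
    fun a b t h => List.isChain_cons_cons.1 h
  have hclass : ∀ p, IsSourceSinkPath A' p →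
      (∃ c, ∃ i : Fin 5, i ≠ 0 ∧
        p = [Sum.inr (c, i), Sum.inr (c, 0), litV n m (φ c (jc c))]) ∨
      (∃ x, ∃ v : RedV n m, (v = Sum.inl (x, 3) ∨ v = Sum.inl (x, 4) ∨ v = Sum.inl (x, 5)) ∧
        ∃ u : RedV n m, ((σ x = false ∧ u = Sum.inl (x, 1)) ∨ (σ x = true ∧ u = Sum.inl (x, 2))) ∧
        p = [u, Sum.inl (x, 0), v]) := by
    intro p hp
    obtain ⟨hlen, hchain, hnd, ⟨s, hs, hsrc⟩, ⟨t, ht, hsink⟩⟩ := hp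
    match p, hlen with
    | a :: b :: t0, _ =>
      rw [List.head?_cons, Option.some_inj] at hs
      subst hs
      obtain ⟨harc, hchain1⟩ := harc_of_chain _ _ _ hchain
      have hbsucc : ∀ (w : RedV n m), (a, w) ∈ A' → w = b → ∀ d t1, t0 = d :: t1 →
          True := fun _ _ _ _ _ _ => trivial
      rcases (hadj a b).1 harc with ⟨x, hσ, rfl, rfl⟩ | ⟨x, hσ, rfl, rfl⟩ | ⟨x, rfl, hv⟩ |
          ⟨c, i, hi, rfl, rfl⟩ | ⟨c, rfl, rfl⟩
      · -- a = (x,1) (σ x = false), b = x_0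
        have harcb : ((Sum.inl (x, 0) : RedV n m), (Sum.inl (x, 3) : RedV n m)) ∈ A' :=
          (hadj _ _).2 (Or.inr (Or.inr (Or.inl ⟨x, rfl, Or.inl rfl⟩)))
        cases t0 with
        | nil =>
          exfalso
          rw [show ([Sum.inl (x, 1), (Sum.inl (x, 0) : RedV n m)].getLast? = some (Sum.inl (x, 0)))
            from rfl, Option.some_inj] at ht
          subst ht
          exact outDeg_pos_of_arc harcb hsink
        | cons d t1 =>
          obtain ⟨harc2, hchain2⟩ := harc_of_chain _ _ _ hchain1
          have hd : d = Sum.inl (x, 3) ∨ d = Sum.inl (x, 4) ∨ d = Sum.inl (x, 5) := by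
            rcases (hadj _ _).1 harc2 with ⟨y, hσ2, h1, h2⟩ | ⟨y, hσ2, h1, h2⟩ | ⟨y, h1, h2⟩ |
                ⟨c2, i2, hi2, h1, h2⟩ | ⟨c2, h1, h2⟩
            · exact absurd h1 (by simp)
            · exact absurd h1 (by simp)
            · rw [Sum.inl.injEq, Prod.mk.injEq] at h1
              obtain ⟨rfl, -⟩ := h1
              exact h2
            · exact nomatch h1
            · exact nomatch h1
          cases t1 with
          | nil => exact Or.inr ⟨x, d, hd, _, Or.inl ⟨hσ, rfl⟩, rfl⟩
          | cons e0 t2 =>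
            exfalso
            obtain ⟨harc3, -⟩ := harc_of_chain _ _ _ hchain2
            rcases (hadj _ _).1 harc3 with ⟨y, hσ3, h1, h2⟩ | ⟨y, hσ3, h1, h2⟩ | ⟨y, h1, h2⟩ |
                ⟨c3, i3, hi3, h1, h2⟩ | ⟨c3, h1, h2⟩ <;>
              rcases hd with rfl | rfl | rfl <;>
              first
                | exact nomatch h1
                | (rw [Sum.inl.injEq, Prod.mk.injEq] at h1; exact absurd h1.2 (by decide))
      · -- a = (x,2) (σ x = true), b = x_0  (mirror case)
        have harcb : ((Sum.inl (x, 0) : RedV n m), (Sum.inl (x, 3) : RedV n m)) ∈ A' :=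
          (hadj _ _).2 (Or.inr (Or.inr (Or.inl ⟨x, rfl, Or.inl rfl⟩)))
        cases t0 with
        | nil =>
          exfalso
          rw [show ([Sum.inl (x, 2), (Sum.inl (x, 0) : RedV n m)].getLast? = some (Sum.inl (x, 0)))
            from rfl, Option.some_inj] at ht
          subst ht
          exact outDeg_pos_of_arc harcb hsink
        | cons d t1 =>
          obtain ⟨harc2, hchain2⟩ := harc_of_chain _ _ _ hchain1
          have hd : d = Sum.inl (x, 3) ∨ d = Sum.inl (x, 4) ∨ d = Sum.inl (x, 5) := by
            rcases (hadj _ _).1 harc2 with ⟨y, hσ2, h1, h2⟩ | ⟨y, hσ2, h1, h2⟩ | ⟨y, h1, h2⟩ |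
                ⟨c2, i2, hi2, h1, h2⟩ | ⟨c2, h1, h2⟩
            · exact absurd h1 (by simp)
            · exact absurd h1 (by simp)
            · rw [Sum.inl.injEq, Prod.mk.injEq] at h1
              obtain ⟨rfl, -⟩ := h1
              exact h2
            · exact nomatch h1
            · exact nomatch h1
          cases t1 with
          | nil => exact Or.inr ⟨x, d, hd, _, Or.inr ⟨hσ, rfl⟩, rfl⟩
          | cons e0 t2 =>
            exfalso
            obtain ⟨harc3, -⟩ := harc_of_chain _ _ _ hchain2
            rcases (hadj _ _).1 harc3 with ⟨y, hσ3, h1, h2⟩ | ⟨y, hσ3, h1, h2⟩ | ⟨y, h1, h2⟩ |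
                ⟨c3, i3, hi3, h1, h2⟩ | ⟨c3, h1, h2⟩ <;>
              rcases hd with rfl | rfl | rfl <;>
              first
                | exact nomatch h1
                | (rw [Sum.inl.injEq, Prod.mk.injEq] at h1; exact absurd h1.2 (by decide))
      · -- a = x_0 : impossible, a is a source but x_0 has an in-arc
        exfalso
        cases hσ : σ x
        · have harcin : ((Sum.inl (x, 1) : RedV n m), (Sum.inl (x, 0) : RedV n m)) ∈ A' :=
            (hadj _ _).2 (Or.inl ⟨x, hσ, rfl, rfl⟩)
          exact inDeg_pos_of_arc harcin hsrc
        · have harcin : ((Sum.inl (x, 2) : RedV n m), (Sum.inl (x, 0) : RedV n m)) ∈ A' :=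
            (hadj _ _).2 (Or.inr (Or.inl ⟨x, hσ, rfl, rfl⟩))
          exact inDeg_pos_of_arc harcin hsrc
      · -- a = (c, i), i ≠ 0, b = c_0
        have harcb : ((Sum.inr (c, 0) : RedV n m), litV n m (φ c (jc c))) ∈ A' :=
          (hadj _ _).2 (Or.inr (Or.inr (Or.inr (Or.inr ⟨c, rfl, rfl⟩))))
        cases t0 with
        | nil =>
          exfalso
          rw [show ([Sum.inr (c, i), (Sum.inr (c, 0) : RedV n m)].getLast? = some (Sum.inr (c, 0)))
            from rfl, Option.some_inj] at ht
          subst ht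
          exact outDeg_pos_of_arc harcb hsink
        | cons d t1 =>
          obtain ⟨harc2, hchain2⟩ := harc_of_chain _ _ _ hchain1
          have hd : d = litV n m (φ c (jc c)) := by
            rcases (hadj _ _).1 harc2 with ⟨y, hσ2, h1, h2⟩ | ⟨y, hσ2, h1, h2⟩ | ⟨y, h1, h2⟩ |
                ⟨c2, i2, hi2, h1, h2⟩ | ⟨c2, h1, h2⟩
            · exact nomatch h1
            · exact nomatch h1
            · exact nomatch h1
            · exfalso
              rw [Sum.inr.injEq, Prod.mk.injEq] at h1
              exact hi2 h1.2.symm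
            · rw [Sum.inr.injEq, Prod.mk.injEq] at h1
              obtain ⟨rfl, -⟩ := h1
              exact h2
          cases t1 with
          | nil =>
            subst hd
            exact Or.inl ⟨c, i, hi, rfl⟩
          | cons e0 t2 =>
            exfalso
            subst hd
            obtain ⟨harc3, -⟩ := harc_of_chain _ _ _ hchain2
            exact hLout c e0 harc3
      · -- a = c_0 : impossible, a is a source but c_0 has an in-arc
        exfalso
        have harcin : ((Sum.inr (c, 1) : RedV n m), (Sum.inr (c, 0) : RedV n m)) ∈ A' :=
          (hadj _ _).2 (Or.inr (Or.inr (Or.inr (Or.inl ⟨c, 1, by decide, rfl, rfl⟩))))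
        exact inDeg_pos_of_arc harcin hsrc
  -- now prove the funnel property
  have arcsOf_triple : ∀ a b c : RedV n m, arcsOf [a, b, c] = [(a, b), (b, c)] :=
    fun _ _ _ => rfl
  intro p hp
  rcases hclass p hp with ⟨c, i, hi, rfl⟩ | ⟨x, v, hv, u, hu, rfl⟩
  · refine ⟨(Sum.inr (c, i), Sum.inr (c, 0)),
      by rw [arcsOf_triple]; exact List.mem_cons_self, ?_⟩
    refine ⟨_, ⟨hp, by rw [arcsOf_triple]; exact List.mem_cons_self⟩, ?_⟩
    rintro q ⟨hq, hqe⟩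
    rcases hclass q hq with ⟨c', i', hi', rfl⟩ | ⟨x', v', hv', u', hu', rfl⟩
    · rw [arcsOf_triple, List.mem_cons, List.mem_singleton] at hqe
      rcases hqe with heq | heq
      · rw [Prod.mk.injEq, Sum.inr.injEq, Sum.inr.injEq, Prod.mk.injEq, Prod.mk.injEq] at heq
        obtain ⟨⟨rfl, rfl⟩, -⟩ := heq
        rfl
      · exfalso
        rw [Prod.mk.injEq] at heq
        rcases hp0 : φ c' (jc c') with ⟨x0, b0⟩
        rw [hp0] at heq
        have h2 := heq.2
        cases b0 <;> exact absurd h2 (by simp [litV])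
    · exfalso
      rw [arcsOf_triple, List.mem_cons, List.mem_singleton] at hqe
      rcases hqe with heq | heq
      · rw [Prod.mk.injEq] at heq
        exact nomatch heq.2
      · rw [Prod.mk.injEq] at heq
        exact nomatch heq.1
  · refine ⟨(Sum.inl (x, 0), v),
      by rw [arcsOf_triple]; exact List.mem_cons_of_mem _ (List.mem_cons_self), ?_⟩
    refine ⟨_, ⟨hp, by rw [arcsOf_triple]; exact List.mem_cons_of_mem _ (List.mem_cons_self)⟩, ?_⟩
    rintro q ⟨hq, hqe⟩
    rcases hclass q hq with ⟨c', i', hi', rfl⟩ | ⟨x', v', hv', u', hu', rfl⟩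
    · exfalso
      rw [arcsOf_triple, List.mem_cons, List.mem_singleton] at hqe
      rcases hqe with heq | heq
      · rw [Prod.mk.injEq] at heq
        exact nomatch heq.1
      · rw [Prod.mk.injEq] at heq
        exact nomatch heq.1
    · rw [arcsOf_triple, List.mem_cons, List.mem_singleton] at hqe
      rcases hqe with heq | heq
      · exfalso
        rcases hu' with ⟨hσ', rfl⟩ | ⟨hσ', rfl⟩ <;>
          · rw [Prod.mk.injEq, Sum.inl.injEq, Prod.mk.injEq] at heq
            exact absurd heq.1.2 (by decide)
      · rw [Prod.mk.injEq, Sum.inl.injEq, Prod.mk.injEq] at heq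
        obtain ⟨⟨rfl, -⟩, rfl⟩ := heq
        rcases hu with ⟨hσ1, rfl⟩ | ⟨hσ1, rfl⟩ <;>
          rcases hu' with ⟨hσ2, rfl⟩ | ⟨hσ2, rfl⟩
        · rfl
        · rw [hσ1] at hσ2; exact nomatch hσ2
        · rw [hσ1] at hσ2; exact nomatch hσ2
        · rfl

end Reduction


lemma isFunnel_empty : IsFunnel (∅ : Finset (V × V)) := by
  intro p hp
  obtain ⟨hlen, hchain, -⟩ := hp
  match p, hlen with
  | a :: b :: t, _ =>
    exact absurd (List.isChain_cons_cons.1 hchain).1 (by simp [ArcAdj])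


/-- For a 3-CNF formula `φ` with `n` variables and `m` clauses,
each clause having three distinct literals, the reduction DAG `D(φ)` has
arc-deletion distance to a funnel at most `2m + n` iff `φ` is satisfiable. -/
theorem reduction_correct (n m : ℕ) (φ : Fin m → Fin 3 → Fin n × Bool)
    (hdistinct : ∀ c : Fin m, Function.Injective (φ c)) :
    funnelDist (redArcs n m φ) ≤ 2 * m + n ↔
      ∃ σ : Fin n → Bool, ∀ c : Fin m, ∃ j : Fin 3, σ (φ c j).1 = (φ c j).2 := by
  constructor
  · intro h
    have hne : {k | ∃ B ⊆ redArcs n m φ, B.card = k ∧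
        IsFunnel (redArcs n m φ \ B)}.Nonempty :=
      ⟨(redArcs n m φ).card, redArcs n m φ, Finset.Subset.refl _, rfl, by
        rw [Finset.sdiff_self]; exact isFunnel_empty⟩
    obtain ⟨B, hBA, hBcard, hfun⟩ := Nat.sInf_mem hne
    exact forward_direction hdistinct hBA (by rw [hBcard]; exact h) hfun
  · rintro ⟨σ, hsat⟩
    obtain ⟨B, hBA, hBcard, hfun⟩ := backward_direction hdistinct σ hsat
    exact le_trans (Nat.sInf_le ⟨B, hBA, rfl, hfun⟩) hBcard
end
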